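/- arXiv:2001.02017 — 4 statements merged into one kernel-verified Lean document; each statement's English description precedes it below -/
import Mathlib

section
/- Let N be a fully reachable k-pair network with a fixed choice of paths P_{s_i,t_j} (1 ≤ i,j ≤ k), and let f_{i,j} : A → ℝ be the unit flow of P_{s_i,t_j} (equal to 1 on the arcs of P_{s_i,t_j} and 0 elsewhere). Given real coefficients c^{(l)}_{i,j} (1 ≤ i,j,l ≤ k), define f_l := Σ_{i,j=1}^k c^{(l)}_{i,j} f_{i,j}. Then (f_1,…,f_k) is an (s_1,…,s_k)–(t_1,…,t_k) multi-flow of rate (1,1,…,1) if and only if for every l: Σ_{j=1}^k c^{(l)}_{i,j} = 0 for all i ≠ l; Σ_{i=1}^k c^{(l)}_{i,j} = 0 for all j ≠ l; and Σ_{i=1}^k Σ_{j=1}^k c^{(l)}_{i,j} = 1. -/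
open scoped BigOperators

/-- A `k`-pair network: a finite DAG with `k` sources of in-degree 0 and
`k` sinks of out-degree 0. -/
structure KPairNetwork (k : ℕ) where
  V : Type
  A : Type
  [fintypeV : Fintype V]
  [fintypeA : Fintype A]
  [decEqV : DecidableEq V]
  [decEqA : DecidableEq A]
  tail : A → V
  head : A → V
  /-- acyclicity, via a topological ordering of the vertices -/
  acyclic : ∃ ord : V → ℕ, ∀ a : A, ord (tail a) < ord (head a)
  src : Fin k → V
  snk : Fin k → V
  src_inj : Function.Injective src
  snk_inj : Function.Injective snk
  src_no_in : ∀ (i : Fin k) (a : A), head a ≠ src i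
  snk_no_out : ∀ (i : Fin k) (a : A), tail a ≠ snk i

attribute [instance] KPairNetwork.fintypeV KPairNetwork.fintypeA
attribute [instance] KPairNetwork.decEqV KPairNetwork.decEqA

namespace KPairNetwork

variable {k : ℕ} (N : KPairNetwork k)

/-- `l` is (the list of arcs of) a directed path from `u` to `v`. -/
def IsPathFrom (u v : N.V) (l : List N.A) : Prop :=
  l ≠ [] ∧ l.Chain' (fun a b => N.head a = N.tail b) ∧
    (∀ a ∈ l.head?, N.tail a = u) ∧ (∀ a ∈ l.getLast?, N.head a = v)

/-- The vertices lying on a (nonempty) list of arcs. -/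
def pathVerts (l : List N.A) : Set N.V :=
  {v | ∃ a ∈ l, v = N.tail a ∨ v = N.head a}

/-- `P i j` is a path from `s i` to `t j`, and for each sink `j` the `k`
paths `P · j` are pairwise arc-disjoint (strong reachability). -/
def IsStrongSystem (P : Fin k → Fin k → List N.A) : Prop :=
  (∀ i j, N.IsPathFrom (N.src i) (N.snk j) (P i j)) ∧
    ∀ (j i i' : Fin k), i ≠ i' → ∀ a : N.A, a ∈ P i j → a ∉ P i' j

/-- Extra strong reachability: in addition, for each sink `j`, two distinct
paths towards `t j` share no vertex other than `t j`. -/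
def IsExtraStrongSystem (P : Fin k → Fin k → List N.A) : Prop :=
  N.IsStrongSystem P ∧
    ∀ (j i i' : Fin k), i ≠ i' →
      ∀ v : N.V, v ∈ N.pathVerts (P i j) → v ∈ N.pathVerts (P i' j) → v = N.snk j

/-- Stability: the choice of the `k` pairwise arc-disjoint paths towards each
sink is unique. -/
def IsStableSystem (P : Fin k → Fin k → List N.A) : Prop :=
  N.IsStrongSystem P ∧
    ∀ (j : Fin k) (Q : Fin k → List N.A),
      (∀ i, N.IsPathFrom (N.src i) (N.snk j) (Q i)) →
      (∀ i i', i ≠ i' → ∀ a : N.A, a ∈ Q i → a ∉ Q i') →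
      ∀ i, Q i = P i j

/-- `excess_f(v) = Σ_{head a = v} f a − Σ_{tail a = v} f a`. -/
noncomputable def excess (f : N.A → ℝ) (v : N.V) : ℝ :=
  (∑ a : N.A, if N.head a = v then f a else 0) -
    (∑ a : N.A, if N.tail a = v then f a else 0)

/-- An `u`–`v` flow: zero excess away from `u` and `v`. -/
def IsFlow (u v : N.V) (f : N.A → ℝ) : Prop :=
  ∀ w : N.V, w ≠ u → w ≠ v → N.excess f w = 0

/-- The unit flow along a path: `1` on its arcs and `0` elsewhere. -/
noncomputable def unitFlow (l : List N.A) : N.A → ℝ :=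
  fun a => if a ∈ l then 1 else 0

/-- The set of source/sink index pairs whose path passes through the arc `a`. -/
def arcPattern (P : Fin k → Fin k → List N.A) (a : N.A) : Finset (Fin k × Fin k) :=
  Finset.univ.filter (fun q => a ∈ P q.1 q.2)

/-- `S_N`, the family of index-pair patterns of the arcs of `N`. -/
def SN (P : Fin k → Fin k → List N.A) : Set (Finset (Fin k × Fin k)) :=
  {T | ∃ a : N.A, T = N.arcPattern P a}

/-! ### Segments and longest common segments -/

/-- A segment: a start vertex together with a (possibly empty) chained list of
arcs starting there.  A segment with no arcs is a single vertex. -/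
def IsSeg (s : N.V × List N.A) : Prop :=
  s.2.Chain' (fun a b => N.head a = N.tail b) ∧ ∀ a ∈ s.2.head?, N.tail a = s.1

/-- The vertices of a segment. -/
def segVerts (s : N.V × List N.A) : Set N.V :=
  insert s.1 (N.pathVerts s.2)

/-- The final vertex of a segment. -/
def segEnd (s : N.V × List N.A) : N.V :=
  s.2.getLast?.elim s.1 N.head

/-- The segment `s` lies on the path `p`. -/
def SegOn (s : N.V × List N.A) (p : List N.A) : Prop :=
  s.2 <:+: p ∧ s.1 ∈ N.pathVerts p

/-- The segment `s` is contained in the segment `s'`. -/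
def SegLE (s s' : N.V × List N.A) : Prop :=
  s.2 <:+: s'.2 ∧ s.1 ∈ N.segVerts s'

/-- `s` is a longest common segment (l.c.s.) of the set of paths `ps`:
it is a segment common to all paths of `ps`, and no segment properly
containing it is common to all paths of `ps`. -/
def IsLCS (ps : Set (List N.A)) (s : N.V × List N.A) : Prop :=
  N.IsSeg s ∧ (∀ p ∈ ps, N.SegOn s p) ∧
    ∀ s' : N.V × List N.A, N.IsSeg s' → N.SegLE s s' → s' ≠ s →
      ∃ p ∈ ps, ¬ N.SegOn s' p

/-- `s` is an l.c.s. of some pair `{P i j₁, P i' j₂}` and lies on `p`. -/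
def IsPairLCSOn (P : Fin k → Fin k → List N.A) (j₁ j₂ : Fin k)
    (p : List N.A) (s : N.V × List N.A) : Prop :=
  (∃ i i' : Fin k, N.IsLCS {P i j₁, P i' j₂} s) ∧ N.SegOn s p

/-- `ℓ^{j₁,j₂}(p)`: the number of l.c.s.'s of pairs `{P i j₁, P i' j₂}` lying
on the path `p`. -/
noncomputable def lcsCount (P : Fin k → Fin k → List N.A) (j₁ j₂ : Fin k)
    (p : List N.A) : ℕ :=
  Nat.card {s : N.V × List N.A | N.IsPairLCSOn P j₁ j₂ p s}

/-- `m_{j₁,j₂}^c = {i : ℓ^{j₁,j₂}(P_{s_i,t_c}) = 1}`. -/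
def mset (P : Fin k → Fin k → List N.A) (j₁ j₂ c : Fin k) : Set (Fin k) :=
  {i | N.lcsCount P j₁ j₂ (P i c) = 1}

/-- `u` lies strictly before `v` along the path `p` (there is a nonempty
infix of `p` going from `u` to `v`). -/
def StrictlyBeforeOn (p : List N.A) (u v : N.V) : Prop :=
  ∃ l : List N.A, l <:+: p ∧ l.head?.map N.tail = some u ∧ l.getLast?.map N.head = some v

/-- `e 0, …, e (L-1)` enumerates, in the order along `p`, the l.c.s.'s
`p(1) < p(2) < ⋯ < p(L)` of pairs `{P i j₁, P i' j₂}` lying on `p`. -/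
def IsLCSEnum (P : Fin k → Fin k → List N.A) (j₁ j₂ : Fin k) (p : List N.A)
    (e : ℕ → N.V × List N.A) (L : ℕ) : Prop :=
  (∀ n, n < L → N.IsPairLCSOn P j₁ j₂ p (e n)) ∧
  (∀ s, N.IsPairLCSOn P j₁ j₂ p s → ∃ n, n < L ∧ e n = s) ∧
  (∀ m n, m < n → n < L → N.StrictlyBeforeOn p (N.segEnd (e m)) (e n).1)

/-! ### Residual networks, regular cycles, semi-cycles and crossings -/

/-- `a` is a `P_{t_j}`-arc. -/
def isPArc (P : Fin k → Fin k → List N.A) (j : Fin k) (a : N.A) : Prop :=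
  ∃ i, a ∈ P i j

/-- The tail of `a` in the `j`-th residual network `N_j` (in which all
`P_{t_j}`-arcs are reversed). -/
def rtail (P : Fin k → Fin k → List N.A) (j : Fin k) (a : N.A) : N.V :=
  if ∃ i, a ∈ P i j then N.head a else N.tail a

/-- The head of `a` in the `j`-th residual network `N_j`. -/
def rhead (P : Fin k → Fin k → List N.A) (j : Fin k) (a : N.A) : N.V :=
  if ∃ i, a ∈ P i j then N.tail a else N.head a

/-- `l` is a directed cycle of the residual network `N_j`. -/
def IsResidCycle (P : Fin k → Fin k → List N.A) (j : Fin k) (l : List N.A) : Prop :=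
  l ≠ [] ∧ l.Nodup ∧
  l.Chain' (fun a b => N.rhead P j a = N.rtail P j b) ∧
  (∀ a ∈ l.getLast?, ∀ b ∈ l.head?, N.rhead P j a = N.rtail P j b) ∧
  (l.map (N.rtail P j)).Nodup

/-- A regular cycle of `N_j`: a directed cycle of `N_j` having no isolated
vertex of `P_{t_j}`, i.e. every vertex of the cycle lying on a path of
`P_{t_j}` is incident in the cycle to some (reversed) `P_{t_j}`-arc. -/
def IsRegularCycle (P : Fin k → Fin k → List N.A) (j : Fin k) (l : List N.A) : Prop :=
  N.IsResidCycle P j l ∧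
    ∀ v ∈ l.map (N.rtail P j),
      (∃ i, v ∈ N.pathVerts (P i j)) →
      ∃ a ∈ l, N.isPArc P j a ∧ (v = N.tail a ∨ v = N.head a)

/-- A `P_{t_j}`-semi-cycle of `N`: the arc set of a regular cycle of `N_j`,
with the original orientations of `N` restored. -/
def IsSemiCycle (P : Fin k → Fin k → List N.A) (j : Fin k) (E : Set N.A) : Prop :=
  ∃ l : List N.A, N.IsRegularCycle P j l ∧ E = {a | a ∈ l}

/-- A `P_{t_j}`-crossing of `N`: a `P_{t_j}`-semi-cycle with all its
`P_{t_j}`-arcs removed. -/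
def IsCrossing (P : Fin k → Fin k → List N.A) (j : Fin k) (E : Set N.A) : Prop :=
  ∃ l : List N.A, N.IsRegularCycle P j l ∧ E = {a | a ∈ l ∧ ¬ N.isPArc P j a}

/-! ### Auxiliary lemmas for Statement 0 -/

lemma chain_nodup (l : List N.A)
    (hc : l.Chain' (fun a b => N.head a = N.tail b)) : l.Nodup := by
  obtain ⟨ord, hord⟩ := N.acyclic
  have h1 : l.Chain' (fun a b => ord (N.tail a) < ord (N.tail b)) := by
    refine List.IsChain.imp ?_ hc
    intro a b h
    calc ord (N.tail a) < ord (N.head a) := hord a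
      _ = ord (N.tail b) := by rw [h]
  haveI : IsTrans N.A (fun a b => ord (N.tail a) < ord (N.tail b)) :=
    ⟨fun _ _ _ hab hbc => lt_trans hab hbc⟩
  have h2 := List.isChain_iff_pairwise.mp h1
  exact h2.imp (fun {a b} hab => by rintro rfl; exact lt_irrefl _ hab)

lemma telescope (g : N.V → ℝ) :
    ∀ (l : List N.A) (a : N.A),
      (a :: l).Chain' (fun x y => N.head x = N.tail y) →
      ((a :: l).map (fun x => g (N.head x) - g (N.tail x))).sum =
        g (N.head ((a :: l).getLast (List.cons_ne_nil a l))) - g (N.tail a) := by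
  intro l
  induction l with
  | nil => intro a _; simp
  | cons b l ih =>
    intro a hc
    obtain ⟨hab, hrest⟩ := List.isChain_cons_cons.mp hc
    have h := ih b hrest
    simp only [List.map_cons, List.sum_cons] at *
    rw [List.getLast_cons (List.cons_ne_nil b l), ← hab] at *
    linarith

lemma sum_map_sub (g₁ g₂ : N.A → ℝ) (l : List N.A) :
    (l.map (fun x => g₁ x - g₂ x)).sum = (l.map g₁).sum - (l.map g₂).sum := by
  induction l with
  | nil => simp
  | cons a l ih => simp [ih]; ring

lemma excess_unitFlow (l : List N.A) (u v : N.V)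
    (h : N.IsPathFrom u v l) (w : N.V) :
    N.excess (N.unitFlow l) w =
      (if v = w then (1:ℝ) else 0) - (if u = w then 1 else 0) := by
  obtain ⟨hne, hc, hu, hv⟩ := h
  obtain ⟨a, l', rfl⟩ := List.exists_cons_of_ne_nil hne
  have hnd : (a :: l').Nodup := N.chain_nodup _ hc
  have hu' : N.tail a = u := hu a rfl
  have hv' : N.head ((a :: l').getLast (List.cons_ne_nil a l')) = v := by
    apply hv
    simp [List.getLast?_eq_getLast (List.cons_ne_nil a l')]
  set g : N.V → ℝ := fun x => if x = w then 1 else 0 with hg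
  have key : ∀ (q : N.A → N.V),
      (∑ x : N.A, if q x = w then N.unitFlow (a :: l') x else 0) =
        ((a :: l').map (fun x => g (q x))).sum := by
    intro q
    have step1 : (∑ x : N.A, if q x = w then N.unitFlow (a :: l') x else 0) =
        ∑ x : N.A, if x ∈ (a :: l') then g (q x) else 0 := by
      refine Finset.sum_congr rfl fun x _ => ?_
      simp only [KPairNetwork.unitFlow, hg]
      split <;> split <;> simp_all
    rw [step1]
    have step2 : (∑ x : N.A, if x ∈ (a :: l') then g (q x) else 0) =
        ∑ x ∈ (a :: l').toFinset, g (q x) := by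
      rw [← Finset.sum_filter]
      congr 1
      ext x
      simp
    rw [step2, List.sum_toFinset _ hnd]
  unfold KPairNetwork.excess
  rw [key, key, ← N.sum_map_sub, N.telescope g (l') a hc, hu', hv']

lemma excess_smulsum (g : Fin k → Fin k → N.A → ℝ) (d : Fin k → Fin k → ℝ)
    (F : N.A → ℝ) (hF : ∀ a, F a = ∑ i : Fin k, ∑ j : Fin k, d i j * g i j a)
    (w : N.V) :
    N.excess F w = ∑ i : Fin k, ∑ j : Fin k, d i j * N.excess (g i j) w := by
  have h1 : ∀ (q : N.A → N.V),
      (∑ a : N.A, if q a = w then F a else 0) =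
        ∑ i : Fin k, ∑ j : Fin k, d i j *
          ∑ a : N.A, (if q a = w then g i j a else 0) := by
    intro q
    have e1 : ∀ a : N.A, (if q a = w then F a else 0) =
        ∑ i : Fin k, ∑ j : Fin k, (if q a = w then d i j * g i j a else 0) := by
      intro a
      rw [hF]
      split <;> simp
    rw [Finset.sum_congr rfl fun a _ => e1 a, Finset.sum_comm]
    refine Finset.sum_congr rfl fun i _ => ?_
    rw [Finset.sum_comm]
    refine Finset.sum_congr rfl fun j _ => ?_
    rw [Finset.mul_sum]
    refine Finset.sum_congr rfl fun a _ => ?_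
    split <;> simp
  unfold KPairNetwork.excess
  rw [h1, h1]
  simp only [Finset.sum_sub_distrib, mul_sub]

end KPairNetwork

/-- Theorem 1 of the paper: for a fully reachable `k`-pair
network with fixed paths `P i j` from `s i` to `t j`, the multi-flow
`f l = Σ_{i,j} c l i j • f_{i,j}` has rate `(1,…,1)` (i.e. each `f l` is an
`s l`–`t l` flow of rate `1`) iff the coefficients satisfy the row, column and
total-sum conditions. -/
theorem statement0 {k : ℕ} (N : KPairNetwork k) (P : Fin k → Fin k → List N.A)
    (hP : ∀ i j, N.IsPathFrom (N.src i) (N.snk j) (P i j))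
    (c : Fin k → Fin k → Fin k → ℝ) (f : Fin k → N.A → ℝ)
    (hf : ∀ l a, f l a = ∑ i : Fin k, ∑ j : Fin k, c l i j * N.unitFlow (P i j) a) :
    ((∀ l, N.IsFlow (N.src l) (N.snk l) (f l)) ∧
      ∀ l, N.excess (f l) (N.snk l) = 1) ↔
    ∀ l : Fin k,
      (∀ i, i ≠ l → ∑ j : Fin k, c l i j = 0) ∧
      (∀ j, j ≠ l → ∑ i : Fin k, c l i j = 0) ∧
      ∑ i : Fin k, ∑ j : Fin k, c l i j = 1 := by
  classical
  have hsnk_ne_src : ∀ (i j : Fin k), N.snk j ≠ N.src i := by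
    intro i j
    obtain ⟨hne, _, _, hv⟩ := hP i j
    have hlast : N.head ((P i j).getLast hne) = N.snk j := by
      apply hv
      simp [List.getLast?_eq_getLast hne]
    rw [← hlast]
    exact N.src_no_in i _
  have key : ∀ (l : Fin k) (w : N.V), N.excess (f l) w =
      (∑ j : Fin k, (if N.snk j = w then (1:ℝ) else 0) * ∑ i : Fin k, c l i j) -
      (∑ i : Fin k, (if N.src i = w then (1:ℝ) else 0) * ∑ j : Fin k, c l i j) := by
    intro l w
    rw [N.excess_smulsum (fun i j => N.unitFlow (P i j)) (c l) (f l) (hf l) w]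
    have e : ∀ i j : Fin k, N.excess (N.unitFlow (P i j)) w =
        (if N.snk j = w then (1:ℝ) else 0) - (if N.src i = w then 1 else 0) :=
      fun i j => N.excess_unitFlow (P i j) _ _ (hP i j) w
    simp only [e, mul_sub, Finset.sum_sub_distrib]
    congr 1
    · rw [Finset.sum_comm]
      exact Finset.sum_congr rfl fun j _ => by rw [← Finset.sum_mul, mul_comm]
    · exact Finset.sum_congr rfl fun i _ => by rw [← Finset.sum_mul, mul_comm]
  have excess_src : ∀ (l i : Fin k),
      N.excess (f l) (N.src i) = -(∑ j : Fin k, c l i j) := by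
    intro l i
    rw [key]
    have h1 : (∑ j : Fin k, (if N.snk j = N.src i then (1:ℝ) else 0) * ∑ i' : Fin k, c l i' j) = 0 :=
      Finset.sum_eq_zero fun j _ => by rw [if_neg (hsnk_ne_src i j), zero_mul]
    have h2 : (∑ i' : Fin k, (if N.src i' = N.src i then (1:ℝ) else 0) * ∑ j : Fin k, c l i' j)
        = ∑ j : Fin k, c l i j := by
      rw [Finset.sum_eq_single i]
      · rw [if_pos rfl, one_mul]
      · intro i' _ hi'
        rw [if_neg (fun e => hi' (N.src_inj e)), zero_mul]
      · simp
    rw [h1, h2, zero_sub]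
  have excess_snk : ∀ (l j : Fin k),
      N.excess (f l) (N.snk j) = ∑ i : Fin k, c l i j := by
    intro l j
    rw [key]
    have h1 : (∑ j' : Fin k, (if N.snk j' = N.snk j then (1:ℝ) else 0) * ∑ i : Fin k, c l i j')
        = ∑ i : Fin k, c l i j := by
      rw [Finset.sum_eq_single j]
      · rw [if_pos rfl, one_mul]
      · intro j' _ hj'
        rw [if_neg (fun e => hj' (N.snk_inj e)), zero_mul]
      · simp
    have h2 : (∑ i : Fin k, (if N.src i = N.snk j then (1:ℝ) else 0) * ∑ j' : Fin k, c l i j') = 0 :=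
      Finset.sum_eq_zero fun i _ => by
        rw [if_neg (fun e => hsnk_ne_src i j e.symm), zero_mul]
    rw [h1, h2, sub_zero]
  constructor
  · rintro ⟨hflow, hrate⟩ l
    have hcol : ∀ j, j ≠ l → ∑ i : Fin k, c l i j = 0 := by
      intro j hj
      have h0 := hflow l (N.snk j) (hsnk_ne_src l j)
        (fun e => hj (N.snk_inj e))
      rwa [excess_snk] at h0
    have hrow : ∀ i, i ≠ l → ∑ j : Fin k, c l i j = 0 := by
      intro i hi
      have h0 := hflow l (N.src i) (fun e => hi (N.src_inj e))
        (fun e => hsnk_ne_src i l e.symm)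
      rw [excess_src] at h0
      linarith
    refine ⟨hrow, hcol, ?_⟩
    have h1 := hrate l
    rw [excess_snk] at h1
    rw [Finset.sum_comm, Finset.sum_eq_single l (fun j _ hj => hcol j hj) (by simp)]
    exact h1
  · intro h
    constructor
    · intro l w hw1 hw2
      rw [key]
      have h1 : (∑ j : Fin k, (if N.snk j = w then (1:ℝ) else 0) * ∑ i : Fin k, c l i j) = 0 :=
        Finset.sum_eq_zero fun j _ => by
          by_cases hj : N.snk j = w
          · have hjl : j ≠ l := by rintro rfl; exact hw2 hj.symm
            rw [(h l).2.1 j hjl, mul_zero]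
          · rw [if_neg hj, zero_mul]
      have h2 : (∑ i : Fin k, (if N.src i = w then (1:ℝ) else 0) * ∑ j : Fin k, c l i j) = 0 :=
        Finset.sum_eq_zero fun i _ => by
          by_cases hi : N.src i = w
          · have hil : i ≠ l := by rintro rfl; exact hw1 hi.symm
            rw [(h l).1 i hil, mul_zero]
          · rw [if_neg hi, zero_mul]
      rw [h1, h2, sub_zero]
    · intro l
      rw [excess_snk]
      have htot := (h l).2.2
      rw [Finset.sum_comm, Finset.sum_eq_single l (fun j _ hj => (h l).2.1 j hj) (by simp)] at htot
      exact htot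
end

section
/- Let N be a strongly reachable k-pair network with a fixed choice of paths P_{s_i,t_j} such that for each j the paths in P_{t_j} are pairwise arc-disjoint, and let C = (c^{(1)},…,c^{(k)}) be a tuple of k×k real matrices satisfying, for every l: Σ_{j=1}^k c^{(l)}_{i,j} = 0 for all i ≠ l, Σ_{i=1}^k c^{(l)}_{i,j} = 0 for all j ≠ l, and Σ_{i,j=1}^k c^{(l)}_{i,j} = 1. If g_s(C) ≤ 1 for every s ∈ S_N, then the multi-flow (f_1,…,f_k) with f_l := Σ_{i,j=1}^k c^{(l)}_{i,j} f_{i,j} is a linear routing solution of N, i.e., it is feasible and has rate (1,1,…,1). -/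
open scoped BigOperators

namespace KPairNetworkAux

variable {k : ℕ} (N : KPairNetwork k)

lemma tele (g : N.V → ℝ) :
    ∀ (l : List N.A), l.Chain' (fun a b => N.head a = N.tail b) →
      ∀ a₀ ∈ l.head?, ∀ a₁ ∈ l.getLast?,
      (l.map (fun a => g (N.head a) - g (N.tail a))).sum
        = g (N.head a₁) - g (N.tail a₀)
  | [], _, a₀, h, _, _ => by simp at h
  | [a], _, a₀, h₀, a₁, h₁ => by
      simp only [List.head?_cons, List.getLast?_singleton, Option.mem_some_iff] at h₀ h₁
      subst h₀; subst h₁; simp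
  | a :: b :: l, hc, a₀, h₀, a₁, h₁ => by
      simp only [List.head?_cons, Option.mem_some_iff] at h₀
      subst h₀
      rw [List.Chain', List.isChain_cons_cons] at hc
      have ih := tele g (b :: l) hc.2 b (by simp) a₁ (by
        simpa [List.getLast?_cons_cons] using h₁)
      simp only [List.map_cons, List.sum_cons] at ih ⊢
      rw [ih, hc.1]
      ring

lemma chain_nodup (l : List N.A) (hc : l.Chain' (fun a b => N.head a = N.tail b)) :
    l.Nodup := by
  obtain ⟨ord, hord⟩ := N.acyclic
  have h2 : l.Chain' (fun a b => ord (N.tail a) < ord (N.tail b)) :=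
    hc.imp (by intro a b h; exact h ▸ hord a)
  haveI : IsTrans N.A (fun a b => ord (N.tail a) < ord (N.tail b)) :=
    ⟨fun _ _ _ h1 h2 => h1.trans h2⟩
  have h3 := List.isChain_iff_pairwise.mp h2
  exact h3.imp (fun h => by rintro rfl; exact lt_irrefl _ h)

lemma map_sum_sub (F G : N.A → ℝ) : ∀ l : List N.A,
    (l.map (fun a => F a - G a)).sum = (l.map F).sum - (l.map G).sum := by
  intro l
  induction l with
  | nil => simp
  | cons a l ih => simp [ih]; ring

lemma sum_ite_mem_list (l : List N.A) (hnd : l.Nodup) (F : N.A → ℝ) :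
    (∑ a : N.A, if a ∈ l then F a else 0) = (l.map F).sum := by
  classical
  rw [← Finset.sum_filter,
    show Finset.univ.filter (· ∈ l) = l.toFinset by ext a; simp]
  exact List.sum_toFinset F hnd

lemma excess_unitFlow (u v : N.V) (l : List N.A) (hl : N.IsPathFrom u v l) (w : N.V) :
    N.excess (N.unitFlow l) w
      = (if w = v then 1 else 0) - (if w = u then 1 else 0) := by
  obtain ⟨hne, hc, hhd, hlast⟩ := hl
  have hnd := chain_nodup N l hc
  have h₀ : l.head? = some (l.head hne) := List.head?_eq_head hne
  have h₁ : l.getLast? = some (l.getLast hne) := List.getLast?_eq_getLast hne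
  have hu : N.tail (l.head hne) = u := hhd _ h₀
  have hv : N.head (l.getLast hne) = v := hlast _ h₁
  set g : N.V → ℝ := fun x => if x = w then 1 else 0 with hg
  have step : ∀ t : N.A → N.V,
      (∑ a : N.A, if t a = w then N.unitFlow l a else 0)
        = (l.map (fun a => g (t a))).sum := by
    intro t
    rw [← sum_ite_mem_list N l hnd (fun a => g (t a))]
    apply Finset.sum_congr rfl
    intro a _
    unfold KPairNetwork.unitFlow
    simp only [hg]
    split_ifs <;> rfl
  unfold KPairNetwork.excess
  rw [step N.head, step N.tail, ← map_sum_sub,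
    tele N g l hc _ h₀ _ h₁, hu, hv]
  have hcomm : ∀ x y : N.V, (if x = y then (1:ℝ) else 0) = (if y = x then 1 else 0) := by
    intro x y
    rcases eq_or_ne x y with h | h
    · simp [h]
    · rw [if_neg h, if_neg (Ne.symm h)]
  simp only [hg]
  rw [hcomm v w, hcomm u w]

end KPairNetworkAux

/-- Theorem 2 of the paper: for a strongly reachable
`k`-pair network, if the coefficient tuple `C` satisfies the rate conditions
and `g_s(C) ≤ 1` for every `s ∈ S_N`, then the multi-flow
`f l = Σ_{i,j} c l i j • f_{i,j}` is a linear routing solution: each `f l` is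
an `s l`–`t l` flow, the rate is `(1,…,1)`, and the multi-flow is feasible. -/
theorem statement1 {k : ℕ} (N : KPairNetwork k) (P : Fin k → Fin k → List N.A)
    (hP : N.IsStrongSystem P)
    (c : Fin k → Fin k → Fin k → ℝ)
    (hrow : ∀ l i, i ≠ l → ∑ j : Fin k, c l i j = 0)
    (hcol : ∀ l j, j ≠ l → ∑ i : Fin k, c l i j = 0)
    (hsum : ∀ l, ∑ i : Fin k, ∑ j : Fin k, c l i j = 1)
    (hg : ∀ T ∈ N.SN P, ∑ l : Fin k, |∑ q ∈ T, c l q.1 q.2| ≤ 1)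
    (f : Fin k → N.A → ℝ)
    (hf : ∀ l a, f l a = ∑ i : Fin k, ∑ j : Fin k, c l i j * N.unitFlow (P i j) a) :
    (∀ l, N.IsFlow (N.src l) (N.snk l) (f l)) ∧
    (∀ l, N.excess (f l) (N.snk l) = 1) ∧
    ∀ a : N.A, ∑ l : Fin k, |f l a| ≤ 1 := by
  classical
  -- sources and sinks are distinct
  have hsns : ∀ i j : Fin k, N.snk j ≠ N.src i := by
    intro i j h
    obtain ⟨hne, _, _, hlast⟩ := hP.1 i j
    have h₁ : (P i j).getLast? = some ((P i j).getLast hne) :=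
      List.getLast?_eq_getLast hne
    have := hlast _ h₁
    exact N.src_no_in i _ (this.trans h)
  -- linearity of excess
  have lin : ∀ l w, N.excess (f l) w
      = ∑ i : Fin k, ∑ j : Fin k, c l i j * N.excess (N.unitFlow (P i j)) w := by
    intro l w
    have h1 : ∀ t : N.A → N.V, (∑ a : N.A, if t a = w then f l a else 0)
        = ∑ i : Fin k, ∑ j : Fin k,
            c l i j * (∑ a : N.A, if t a = w then N.unitFlow (P i j) a else 0) := by
      intro t
      calc (∑ a : N.A, if t a = w then f l a else 0)
          = ∑ a : N.A, ∑ i : Fin k, ∑ j : Fin k,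
              (if t a = w then c l i j * N.unitFlow (P i j) a else 0) := by
            apply Finset.sum_congr rfl; intro a _
            rw [hf]; split_ifs <;> simp
        _ = ∑ i : Fin k, ∑ j : Fin k, ∑ a : N.A,
              (if t a = w then c l i j * N.unitFlow (P i j) a else 0) := by
            rw [Finset.sum_comm]
            exact Finset.sum_congr rfl fun i _ => Finset.sum_comm
        _ = ∑ i : Fin k, ∑ j : Fin k,
              c l i j * (∑ a : N.A, if t a = w then N.unitFlow (P i j) a else 0) := by
            apply Finset.sum_congr rfl; intro i _
            apply Finset.sum_congr rfl; intro j _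
            rw [Finset.mul_sum]
            apply Finset.sum_congr rfl; intro a _
            split_ifs <;> simp
    unfold KPairNetwork.excess
    rw [h1 N.head, h1 N.tail, ← Finset.sum_sub_distrib]
    apply Finset.sum_congr rfl; intro i _
    rw [← Finset.sum_sub_distrib]
    apply Finset.sum_congr rfl; intro j _
    ring
  -- the key excess formula
  have hex2 : ∀ l w, N.excess (f l) w
      = (∑ j : Fin k, if w = N.snk j then (∑ i : Fin k, c l i j) else 0)
      - (∑ i : Fin k, if w = N.src i then (∑ j : Fin k, c l i j) else 0) := by
    intro l w
    rw [lin l w]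
    have huf : ∀ i j : Fin k, N.excess (N.unitFlow (P i j)) w
        = (if w = N.snk j then 1 else 0) - (if w = N.src i then 1 else 0) :=
      fun i j => KPairNetworkAux.excess_unitFlow N _ _ _ (hP.1 i j) w
    calc (∑ i : Fin k, ∑ j : Fin k, c l i j * N.excess (N.unitFlow (P i j)) w)
        = ∑ i : Fin k, ∑ j : Fin k,
            ((if w = N.snk j then c l i j else 0) - (if w = N.src i then c l i j else 0)) := by
          apply Finset.sum_congr rfl; intro i _
          apply Finset.sum_congr rfl; intro j _
          rw [huf i j]
          split_ifs <;> ring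
      _ = (∑ i : Fin k, ∑ j : Fin k, if w = N.snk j then c l i j else 0)
          - (∑ i : Fin k, ∑ j : Fin k, if w = N.src i then c l i j else 0) := by
          rw [← Finset.sum_sub_distrib]
          exact Finset.sum_congr rfl fun i _ => Finset.sum_sub_distrib _ _
      _ = (∑ j : Fin k, if w = N.snk j then (∑ i : Fin k, c l i j) else 0)
          - (∑ i : Fin k, if w = N.src i then (∑ j : Fin k, c l i j) else 0) := by
          congr 1
          · rw [Finset.sum_comm]
            apply Finset.sum_congr rfl; intro j _
            by_cases h : w = N.snk j <;> simp [h]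
          · apply Finset.sum_congr rfl; intro i _
            by_cases h : w = N.src i <;> simp [h]
  -- diagonal column sum is 1
  have hdiag : ∀ l, (∑ i : Fin k, c l i l) = 1 := by
    intro l
    have h1 : (∑ j : Fin k, ∑ i : Fin k, c l i j) = 1 := by
      rw [Finset.sum_comm]; exact hsum l
    rw [← h1, Finset.sum_eq_single l (fun j _ hj => hcol l j hj) (by simp)]
  refine ⟨?_, ?_, ?_⟩
  · -- flow condition
    intro l w hw1 hw2
    rw [hex2 l w]
    have e1 : (∑ j : Fin k, if w = N.snk j then (∑ i : Fin k, c l i j) else 0) = 0 := by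
      apply Finset.sum_eq_zero; intro j _
      by_cases h : w = N.snk j
      · rw [if_pos h, hcol l j (fun e => hw2 (by rw [h, e]))]
      · rw [if_neg h]
    have e2 : (∑ i : Fin k, if w = N.src i then (∑ j : Fin k, c l i j) else 0) = 0 := by
      apply Finset.sum_eq_zero; intro i _
      by_cases h : w = N.src i
      · rw [if_pos h, hrow l i (fun e => hw1 (by rw [h, e]))]
      · rw [if_neg h]
    rw [e1, e2, sub_zero]
  · -- rate condition
    intro l
    rw [hex2 l (N.snk l)]
    have e2 : (∑ i : Fin k, if N.snk l = N.src i then (∑ j : Fin k, c l i j) else 0) = 0 :=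
      Finset.sum_eq_zero fun i _ => if_neg (hsns i l)
    have e1 : (∑ j : Fin k, if N.snk l = N.snk j then (∑ i : Fin k, c l i j) else 0)
        = ∑ i : Fin k, c l i l := by
      rw [Finset.sum_eq_single l]
      · rw [if_pos rfl]
      · intro j _ hj
        exact if_neg (fun e => hj (N.snk_inj e).symm)
      · simp
    rw [e1, e2, hdiag l, sub_zero]
  · -- feasibility
    intro a
    have hfa : ∀ l, f l a = ∑ q ∈ N.arcPattern P a, c l q.1 q.2 := by
      intro l
      rw [hf]
      calc (∑ i : Fin k, ∑ j : Fin k, c l i j * N.unitFlow (P i j) a)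
          = ∑ i : Fin k, ∑ j : Fin k, (if a ∈ P i j then c l i j else 0) := by
            apply Finset.sum_congr rfl; intro i _
            apply Finset.sum_congr rfl; intro j _
            unfold KPairNetwork.unitFlow
            split_ifs <;> simp
        _ = ∑ q : Fin k × Fin k, (if a ∈ P q.1 q.2 then c l q.1 q.2 else 0) := by
            rw [← Finset.univ_product_univ, Finset.sum_product]
        _ = ∑ q ∈ N.arcPattern P a, c l q.1 q.2 := by
            rw [KPairNetwork.arcPattern, Finset.sum_filter]
    simp only [hfa]
    exact hg _ ⟨a, rfl⟩
end

section
/- Let N be a stable 3-pair network with fixed paths r_i = P_{s_i,t_1} and g_i = P_{s_i,t_2} (i = 1,2,3), let p, q ∈ {r_1, r_2, r_3, g_1, g_2, g_3} with p ≠ q, and let 1 ≤ n ≤ ℓ(p) − 1. If the l.c.s. p(n) is contained in q, then p(n+1) is not contained in q. -/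
open scoped BigOperators

namespace KPairNetwork

variable {k : ℕ} {N : KPairNetwork k}

section Helpers

variable {ord : N.V → ℕ}

/-- along a chain, the head of the first arc is `≤` the tail of any later arc -/
lemma chain_cons_le (hord : ∀ a : N.A, ord (N.tail a) < ord (N.head a))
    {a : N.A} {t : List N.A}
    (hl : List.Chain' (fun a b => N.head a = N.tail b) (a :: t)) :
    ∀ b ∈ t, ord (N.head a) ≤ ord (N.tail b) := by
  induction t generalizing a with
  | nil => simp
  | cons c t ih =>
    intro b hb
    have h1 : N.head a = N.tail c := (List.isChain_cons_cons.mp hl).1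
    have h2 := (List.isChain_cons_cons.mp hl).2
    rcases List.mem_cons.mp hb with rfl | hb
    · exact le_of_eq (congrArg ord h1)
    · exact le_trans (le_of_eq (congrArg ord h1))
        (le_trans (le_of_lt (hord c)) (ih h2 b hb))

lemma head_le_mem (hord : ∀ a : N.A, ord (N.tail a) < ord (N.head a))
    {l : List N.A} (hl : List.Chain' (fun a b => N.head a = N.tail b) l)
    {b : N.A} (hb : b ∈ l.head?) {a : N.A} (ha : a ∈ l) :
    ord (N.tail b) ≤ ord (N.tail a) := by
  cases l with
  | nil => cases ha
  | cons c t =>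
    have hbc : c = b := by simpa using hb
    subst hbc
    rcases List.mem_cons.mp ha with rfl | ha
    · exact le_refl _
    · exact le_trans (le_of_lt (hord c)) (chain_cons_le hord hl a ha)

lemma mem_le_getLast (hord : ∀ a : N.A, ord (N.tail a) < ord (N.head a))
    {l : List N.A} (hl : List.Chain' (fun a b => N.head a = N.tail b) l)
    {b : N.A} (hb : b ∈ l.getLast?) {a : N.A} (ha : a ∈ l) :
    ord (N.head a) ≤ ord (N.head b) := by
  induction l with
  | nil => cases ha
  | cons c t ih =>
    cases t with
    | nil =>
      have hac : a = c := by simpa using ha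
      have hbc : c = b := by simpa using hb
      subst hac; subst hbc; exact le_refl _
    | cons d t' =>
      have hb' : b ∈ (d :: t').getLast? := by
        simpa [List.getLast?_cons_cons] using hb
      have hl' : List.Chain' (fun a b => N.head a = N.tail b) (d :: t') :=
        (List.isChain_cons_cons.mp hl).2
      rcases List.mem_cons.mp ha with rfl | ha
      · have hbmem : b ∈ d :: t' := List.mem_of_mem_getLast? hb'
        calc ord (N.head a) ≤ ord (N.tail b) := chain_cons_le hord hl b hbmem
          _ ≤ ord (N.head b) := le_of_lt (hord b)
      · exact ih hl' hb' ha

lemma vert_le_getLast (hord : ∀ a : N.A, ord (N.tail a) < ord (N.head a))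
    {l : List N.A} (hl : List.Chain' (fun a b => N.head a = N.tail b) l)
    {b : N.A} (hb : b ∈ l.getLast?) {z : N.V} (hz : z ∈ N.pathVerts l) :
    ord z ≤ ord (N.head b) := by
  obtain ⟨a, ha, hza⟩ := hz
  rcases hza with rfl | rfl
  · exact le_trans (le_of_lt (hord a)) (mem_le_getLast hord hl hb ha)
  · exact mem_le_getLast hord hl hb ha

lemma head_le_vert (hord : ∀ a : N.A, ord (N.tail a) < ord (N.head a))
    {l : List N.A} (hl : List.Chain' (fun a b => N.head a = N.tail b) l)
    {b : N.A} (hb : b ∈ l.head?) {z : N.V} (hz : z ∈ N.pathVerts l) :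
    ord (N.tail b) ≤ ord z := by
  obtain ⟨a, ha, hza⟩ := hz
  rcases hza with rfl | rfl
  · exact head_le_mem hord hl hb ha
  · exact le_trans (head_le_mem hord hl hb ha) (le_of_lt (hord a))

lemma strictlyBefore_ord (hord : ∀ a : N.A, ord (N.tail a) < ord (N.head a))
    {p : List N.A} (hp : List.Chain' (fun a b => N.head a = N.tail b) p)
    {u v : N.V} (h : N.StrictlyBeforeOn p u v) : ord u < ord v := by
  obtain ⟨l, hinf, hh, hlast⟩ := h
  obtain ⟨hd, hhd, rfl⟩ := Option.map_eq_some_iff.mp hh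
  obtain ⟨lst, hlst, rfl⟩ := Option.map_eq_some_iff.mp hlast
  have hl : List.Chain' (fun a b => N.head a = N.tail b) l := hp.infix hinf
  exact lt_of_le_of_lt (head_le_mem hord hl hhd (List.mem_of_mem_getLast? hlst))
    (hord lst)

lemma exists_split {l : List N.A}
    (hl : List.Chain' (fun a b => N.head a = N.tail b) l)
    {z : N.V} (hz : z ∈ N.pathVerts l) :
    ∃ l₁ l₂, l = l₁ ++ l₂ ∧ (∀ a ∈ l₁.getLast?, N.head a = z) ∧
      (∀ a ∈ l₂.head?, N.tail a = z) ∧ (l₁ ≠ [] ∨ l₂ ≠ []) := by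
  obtain ⟨a, ha, hza⟩ := hz
  obtain ⟨s, t, rfl⟩ := List.append_of_mem ha
  rcases hza with rfl | rfl
  · refine ⟨s, a :: t, rfl, ?_, by simp, Or.inr (by simp)⟩
    intro b hb
    exact (List.isChain_append.mp hl).2.2 b hb a (by simp)
  · refine ⟨s ++ [a], t, by simp, ?_, ?_, Or.inl (by simp)⟩
    · intro b hb
      have hba : a = b := by
        have h' : (s ++ [a]).getLast? = some a := by
          simp [List.getLast?_append]
        rw [h'] at hb; simpa using hb
      subst hba; rfl
    · intro b hb
      have hca : List.Chain' (fun a b => N.head a = N.tail b) (a :: t) :=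
        (List.isChain_append.mp hl).2.1
      exact ((List.isChain_cons.mp hca).1 b hb).symm

lemma pathVerts_append {l₁ l₂ : List N.A} :
    N.pathVerts (l₁ ++ l₂) = N.pathVerts l₁ ∪ N.pathVerts l₂ := by
  ext z
  simp only [pathVerts, Set.mem_setOf_eq, Set.mem_union, List.mem_append]
  constructor
  · rintro ⟨a, ha | ha, h⟩
    · exact Or.inl ⟨a, ha, h⟩
    · exact Or.inr ⟨a, ha, h⟩
  · rintro (⟨a, ha, h⟩ | ⟨a, ha, h⟩)
    · exact ⟨a, Or.inl ha, h⟩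
    · exact ⟨a, Or.inr ha, h⟩

lemma vert_cases_start {l : List N.A}
    (hl : List.Chain' (fun a b => N.head a = N.tail b) l)
    {z : N.V} (hz : z ∈ N.pathVerts l) :
    (∃ a ∈ l.head?, z = N.tail a) ∨ ∃ a ∈ l, z = N.head a := by
  obtain ⟨a, ha, hza⟩ := hz
  rcases hza with rfl | rfl
  · obtain ⟨s, t, rfl⟩ := List.append_of_mem ha
    cases s with
    | nil => exact Or.inl ⟨a, by simp, rfl⟩
    | cons c s' =>
      have hne : c :: s' ≠ [] := by simp
      have hb : (c :: s').getLast hne ∈ (c :: s').getLast? := by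
        rw [List.getLast?_eq_getLast hne]; rfl
      have := (List.isChain_append.mp hl).2.2 _ hb a (by simp)
      refine Or.inr ⟨(c :: s').getLast hne, ?_, this.symm⟩
      exact List.mem_append_left _ (List.getLast_mem hne)
  · exact Or.inr ⟨a, ha, rfl⟩

lemma vert_cases_end {l : List N.A}
    (hl : List.Chain' (fun a b => N.head a = N.tail b) l)
    {z : N.V} (hz : z ∈ N.pathVerts l) :
    (∃ a ∈ l.getLast?, z = N.head a) ∨ ∃ a ∈ l, z = N.tail a := by
  obtain ⟨a, ha, hza⟩ := hz
  rcases hza with rfl | rfl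
  · exact Or.inr ⟨a, ha, rfl⟩
  · obtain ⟨s, t, rfl⟩ := List.append_of_mem ha
    cases t with
    | nil =>
      refine Or.inl ⟨a, ?_, rfl⟩
      simp [List.getLast?_append]
    | cons d t' =>
      have hca : List.Chain' (fun a b => N.head a = N.tail b) (a :: d :: t') :=
        (List.isChain_append.mp hl).2.1
      have hlink : N.head a = N.tail d := (List.isChain_cons_cons.mp hca).1
      refine Or.inr ⟨d, ?_, hlink⟩
      exact List.mem_append_right _ (by simp)

lemma not_snk_mem_path {u : N.V} {c c' : Fin k} {l : List N.A}
    (hpath : N.IsPathFrom u (N.snk c) l) (hne : c' ≠ c) :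
    N.snk c' ∉ N.pathVerts l := by
  intro hz
  rcases vert_cases_end hpath.2.1 hz with ⟨a, ha, hza⟩ | ⟨a, ha, hza⟩
  · exact hne (N.snk_inj (hza.trans (hpath.2.2.2 a ha)))
  · exact N.snk_no_out c' a hza.symm

lemma not_src_mem_path {v : N.V} {i i' : Fin k} {l : List N.A}
    (hpath : N.IsPathFrom (N.src i) v l) (hne : i' ≠ i) :
    N.src i' ∉ N.pathVerts l := by
  intro hz
  rcases vert_cases_start hpath.2.1 hz with ⟨a, ha, hza⟩ | ⟨a, ha, hza⟩
  · exact hne (N.src_inj (hza.trans (hpath.2.2.1 a ha)))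
  · exact N.src_no_in i' a hza.symm

end Helpers

end KPairNetwork

namespace KPairNetwork

variable {k : ℕ} {N : KPairNetwork k}

section Helpers2

variable {ord : N.V → ℕ}

lemma head?_append_left {α : Type _} {l₁ l₂ : List α} (h : l₁ ≠ []) :
    (l₁ ++ l₂).head? = l₁.head? := by
  cases l₁ with
  | nil => exact absurd rfl h
  | cons a t => rfl

lemma getLast?_append_right {α : Type _} {l₁ l₂ : List α} (h : l₂ ≠ []) :
    (l₁ ++ l₂).getLast? = l₂.getLast? := by
  cases h' : l₂.getLast? with
  | none => exact absurd (by simpa using h') h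
  | some a => simp [List.getLast?_append, h']

lemma split_right_ne_nil (hord : ∀ a : N.A, ord (N.tail a) < ord (N.head a))
    {l l₁ l₂ : List N.A} (hl : List.Chain' (fun a b => N.head a = N.tail b) l)
    (hsplit : l = l₁ ++ l₂) (h₁ : ∀ a ∈ l₁.getLast?, N.head a = v)
    {z : N.V} (hz : z ∈ N.pathVerts l) (hvz : ord v < ord z) : l₂ ≠ [] := by
  intro h
  subst h
  have hlne : l ≠ [] := by
    rintro rfl
    obtain ⟨a, ha, -⟩ := hz
    cases ha
  have hlast : l.getLast? = some (l.getLast hlne) := List.getLast?_eq_getLast hlne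
  have hl₁ : l₁ = l := by rw [hsplit, List.append_nil]
  have hmem : l.getLast hlne ∈ l₁.getLast? := by
    rw [hl₁, hlast]; rfl
  have h2 := h₁ _ hmem
  have h3 : ord z ≤ ord (N.head (l.getLast hlne)) :=
    vert_le_getLast hord hl (by rw [hlast]; rfl) hz
  rw [h2] at h3
  exact absurd hvz (not_lt.mpr h3)

lemma split_left_ne_nil (hord : ∀ a : N.A, ord (N.tail a) < ord (N.head a))
    {l l₁ l₂ : List N.A} (hl : List.Chain' (fun a b => N.head a = N.tail b) l)
    (hsplit : l = l₁ ++ l₂) (h₂ : ∀ a ∈ l₂.head?, N.tail a = v)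
    {z : N.V} (hz : z ∈ N.pathVerts l) (hvz : ord z < ord v) : l₁ ≠ [] := by
  intro h
  subst h
  have hlne : l ≠ [] := by
    rintro rfl
    obtain ⟨a, ha, -⟩ := hz
    cases ha
  obtain ⟨hd, t, hhd⟩ : ∃ hd t, l = hd :: t := by
    cases l with
    | nil => exact absurd rfl hlne
    | cons a t => exact ⟨a, t, rfl⟩
  have hmem : hd ∈ l₂.head? := by
    rw [← List.nil_append l₂, ← hsplit, hhd]; rfl
  have h2 := h₂ _ hmem
  have h3 : ord (N.tail hd) ≤ ord z := head_le_vert hord hl (by rw [hhd]; rfl) hz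
  rw [h2] at h3
  exact absurd hvz (not_lt.mpr h3)

lemma mem_left_head_le (hord : ∀ a : N.A, ord (N.tail a) < ord (N.head a))
    {l l₁ l₂ : List N.A} (hl : List.Chain' (fun a b => N.head a = N.tail b) l)
    (hsplit : l = l₁ ++ l₂) (h₁ : ∀ a ∈ l₁.getLast?, N.head a = v)
    {a : N.A} (ha : a ∈ l₁) : ord (N.head a) ≤ ord v := by
  have h₁ne : l₁ ≠ [] := List.ne_nil_of_mem ha
  have hch : List.Chain' (fun a b => N.head a = N.tail b) l₁ :=
    (List.isChain_append.mp (hsplit ▸ hl)).1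
  have hlast : l₁.getLast? = some (l₁.getLast h₁ne) := List.getLast?_eq_getLast h₁ne
  have := mem_le_getLast hord hch (b := l₁.getLast h₁ne) (by rw [hlast]; rfl) ha
  rwa [h₁ (l₁.getLast h₁ne) (by rw [hlast]; rfl)] at this

lemma mem_right_tail_ge (hord : ∀ a : N.A, ord (N.tail a) < ord (N.head a))
    {l l₁ l₂ : List N.A} (hl : List.Chain' (fun a b => N.head a = N.tail b) l)
    (hsplit : l = l₁ ++ l₂) (h₂ : ∀ a ∈ l₂.head?, N.tail a = v)
    {a : N.A} (ha : a ∈ l₂) : ord v ≤ ord (N.tail a) := by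
  have h₂ne : l₂ ≠ [] := List.ne_nil_of_mem ha
  have hch : List.Chain' (fun a b => N.head a = N.tail b) l₂ :=
    (List.isChain_append.mp (hsplit ▸ hl)).2.1
  obtain ⟨hd, t, hhd⟩ : ∃ hd t, l₂ = hd :: t := by
    cases l₂ with
    | nil => exact absurd rfl h₂ne
    | cons b t => exact ⟨b, t, rfl⟩
  have hmem : hd ∈ l₂.head? := by rw [hhd]; rfl
  have := head_le_mem hord hch hmem ha
  rwa [h₂ _ hmem] at this

lemma seg_ord_start (hord : ∀ a : N.A, ord (N.tail a) < ord (N.head a))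
    {s : N.V × List N.A} (hs : N.IsSeg s) {a : N.A} (ha : a ∈ s.2) :
    ord s.1 ≤ ord (N.tail a) := by
  obtain ⟨hd, t, hhd⟩ : ∃ hd t, s.2 = hd :: t := by
    cases h : s.2 with
    | nil => rw [h] at ha; cases ha
    | cons b t => exact ⟨b, t, rfl⟩
  have hmem : hd ∈ s.2.head? := by rw [hhd]; rfl
  have := head_le_mem hord hs.1 hmem ha
  rwa [hs.2 _ hmem] at this

lemma seg_ord_end (hord : ∀ a : N.A, ord (N.tail a) < ord (N.head a))
    {s : N.V × List N.A} (hs : N.IsSeg s) {a : N.A} (ha : a ∈ s.2) :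
    ord (N.head a) ≤ ord (N.segEnd s) := by
  have hne : s.2 ≠ [] := List.ne_nil_of_mem ha
  have hlast : s.2.getLast? = some (s.2.getLast hne) := List.getLast?_eq_getLast hne
  have hend : N.segEnd s = N.head (s.2.getLast hne) := by
    rw [segEnd, hlast]; rfl
  rw [hend]
  exact mem_le_getLast hord hs.1 (by rw [hlast]; rfl) ha

lemma seg_ord_startEnd (hord : ∀ a : N.A, ord (N.tail a) < ord (N.head a))
    {s : N.V × List N.A} (hs : N.IsSeg s) : ord s.1 ≤ ord (N.segEnd s) := by
  cases h : s.2 with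
  | nil => rw [segEnd, h]; exact le_refl _
  | cons b t =>
    have hb : b ∈ s.2 := by rw [h]; simp
    exact le_trans (seg_ord_start hord hs hb)
      (le_trans (le_of_lt (hord b)) (seg_ord_end hord hs hb))

lemma segEnd_mem_pathVerts {s : N.V × List N.A} {q : List N.A}
    (hon : N.SegOn s q) : N.segEnd s ∈ N.pathVerts q := by
  cases h : s.2 with
  | nil => rw [segEnd, h]; exact hon.2
  | cons b t =>
    have hne : s.2 ≠ [] := by rw [h]; simp
    have hlast : s.2.getLast? = some (s.2.getLast hne) := List.getLast?_eq_getLast hne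
    have hend : N.segEnd s = N.head (s.2.getLast hne) := by rw [segEnd, hlast]; rfl
    rw [hend]
    exact ⟨s.2.getLast hne, (hon.1.sublist).mem (List.getLast_mem hne), Or.inr rfl⟩

lemma exists_lcs_containing {p g : List N.A} (z : N.A) (hzp : z ∈ p) (hzg : z ∈ g) :
    ∃ S : N.V × List N.A, N.IsLCS {p, g} S ∧ z ∈ S.2 := by
  classical
  set 𝒮 : Set (N.V × List N.A) :=
    {s | N.IsSeg s ∧ N.SegOn s p ∧ N.SegOn s g ∧ z ∈ s.2} with h𝒮
  have hsingle : ∀ {l : List N.A}, z ∈ l → [z] <:+: l := by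
    intro l hl
    obtain ⟨s, t, rfl⟩ := List.append_of_mem hl
    exact ⟨s, t, by simp⟩
  have h0 : (N.tail z, [z]) ∈ 𝒮 := by
    refine ⟨⟨List.isChain_singleton _, by simp⟩, ⟨hsingle hzp, ⟨z, hzp, Or.inl rfl⟩⟩,
      ⟨hsingle hzg, ⟨z, hzg, Or.inl rfl⟩⟩, by simp⟩
  set T : Set ℕ := {n | ∃ s ∈ 𝒮, s.2.length = n} with hT
  have hTne : T.Nonempty := ⟨1, ⟨_, h0, rfl⟩⟩
  have hTb : BddAbove T := by
    refine ⟨p.length, ?_⟩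
    rintro m ⟨s, hs, rfl⟩
    exact hs.2.1.1.length_le
  obtain ⟨S, hS, hSlen⟩ := Nat.sSup_mem hTne hTb
  refine ⟨S, ⟨hS.1, ?_, ?_⟩, hS.2.2.2⟩
  · intro r hr
    rcases hr with rfl | hr
    · exact hS.2.1
    · rw [Set.mem_singleton_iff] at hr; subst hr; exact hS.2.2.1
  · intro s' hseg' hle hne
    by_contra hcon
    push_neg at hcon
    have hs' : s' ∈ 𝒮 := by
      refine ⟨hseg', hcon p (by simp), hcon g (by simp), ?_⟩
      exact (hle.1.sublist).mem hS.2.2.2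
    have hlen : s'.2.length ≤ S.2.length := by
      rw [hSlen]
      exact le_csSup hTb ⟨s', hs', rfl⟩
    have hl2 : S.2 = s'.2 :=
      (hle.1.sublist).eq_of_length (le_antisymm hle.1.length_le hlen)
    apply hne
    have hnil : S.2 ≠ [] := List.ne_nil_of_mem hS.2.2.2
    obtain ⟨hd, t, hhd⟩ : ∃ hd t, S.2 = hd :: t := by
      cases h : S.2 with
      | nil => exact absurd h hnil
      | cons b t => exact ⟨b, t, rfl⟩
    have hmem : hd ∈ S.2.head? := by rw [hhd]; rfl
    have hmem' : hd ∈ s'.2.head? := by rw [← hl2, hhd]; rfl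
    have h1 : s'.1 = S.1 := by
      rw [← hseg'.2 _ hmem', ← hS.1.2 _ hmem]
    exact Prod.ext h1 hl2.symm
  
end Helpers2

end KPairNetwork

open KPairNetwork


/-- Lemma 3 of the paper: in a stable 3-pair network, for
paths `p ≠ q` among `r_1, r_2, r_3, g_1, g_2, g_3` (where `r i = P i t₁`,
`g i = P i t₂`), if the `n`-th l.c.s. `p(n)` on `p` is contained in `q`, then
`p(n+1)` is not contained in `q`.  (Here `e` enumerates, in order along `p`,
the l.c.s.'s of pairs `{r_i, g_j}` lying on `p`; indices are 0-based.) -/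
theorem statement3 (N : KPairNetwork 3) (P : Fin 3 → Fin 3 → List N.A)
    (hP : N.IsStableSystem P)
    (p q : List N.A)
    (hp : p ∈ ({P 0 0, P 1 0, P 2 0, P 0 1, P 1 1, P 2 1} : Set (List N.A)))
    (hq : q ∈ ({P 0 0, P 1 0, P 2 0, P 0 1, P 1 1, P 2 1} : Set (List N.A)))
    (hpq : p ≠ q)
    (e : ℕ → N.V × List N.A) (L : ℕ)
    (he : N.IsLCSEnum P 0 1 p e L)
    (n : ℕ) (hn : n + 1 < L)
    (hon : N.SegOn (e n) q) :
    ¬ N.SegOn (e (n + 1)) q := by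
  classical
  intro hBq
  obtain ⟨ord, hord⟩ := N.acyclic
  obtain ⟨⟨hpaths, hdisj⟩, huniq⟩ := hP
  obtain ⟨he1, he2, he3⟩ := he
  have hnL : n < L := Nat.lt_of_succ_lt hn
  obtain ⟨hAex, hAp⟩ := he1 n hnL
  obtain ⟨hBex, hBp⟩ := he1 (n + 1) hn
  have hAseg : N.IsSeg (e n) := by obtain ⟨i, i', h⟩ := hAex; exact h.1
  have hBseg : N.IsSeg (e (n + 1)) := by obtain ⟨i, i', h⟩ := hBex; exact h.1
  obtain ⟨ap, cp, hcp, hpe⟩ : ∃ a c : Fin 3, (c = 0 ∨ c = 1) ∧ p = P a c := by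
    simp only [Set.mem_insert_iff, Set.mem_singleton_iff] at hp
    rcases hp with h | h | h | h | h | h
    exacts [⟨0, 0, Or.inl rfl, h⟩, ⟨1, 0, Or.inl rfl, h⟩, ⟨2, 0, Or.inl rfl, h⟩,
      ⟨0, 1, Or.inr rfl, h⟩, ⟨1, 1, Or.inr rfl, h⟩, ⟨2, 1, Or.inr rfl, h⟩]
  obtain ⟨aq, cq, hcq, hqe⟩ : ∃ a c : Fin 3, (c = 0 ∨ c = 1) ∧ q = P a c := by
    simp only [Set.mem_insert_iff, Set.mem_singleton_iff] at hq
    rcases hq with h | h | h | h | h | h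
    exacts [⟨0, 0, Or.inl rfl, h⟩, ⟨1, 0, Or.inl rfl, h⟩, ⟨2, 0, Or.inl rfl, h⟩,
      ⟨0, 1, Or.inr rfl, h⟩, ⟨1, 1, Or.inr rfl, h⟩, ⟨2, 1, Or.inr rfl, h⟩]
  have hppath : N.IsPathFrom (N.src ap) (N.snk cp) p := by rw [hpe]; exact hpaths ap cp
  have hqpath : N.IsPathFrom (N.src aq) (N.snk cq) q := by rw [hqe]; exact hpaths aq cq
  have hchp := hppath.2.1
  have hchq := hqpath.2.1
  have hvw : N.StrictlyBeforeOn p (N.segEnd (e n)) (e (n + 1)).1 :=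
    he3 n (n + 1) (Nat.lt_succ_self n) hn
  have hvltw : ord (N.segEnd (e n)) < ord (e (n + 1)).1 :=
    strictlyBefore_ord hord hchp hvw
  have hvp : N.segEnd (e n) ∈ N.pathVerts p := segEnd_mem_pathVerts hAp
  have hvq : N.segEnd (e n) ∈ N.pathVerts q := segEnd_mem_pathVerts hon
  have hwp : (e (n + 1)).1 ∈ N.pathVerts p := hBp.2
  have hwq : (e (n + 1)).1 ∈ N.pathVerts q := hBq.2
  by_cases hcc : cp = cq
  · -- p and q point to the same sink: exchange suffixes at the common vertex v
    subst hcc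
    have hapaq : ap ≠ aq := by rintro rfl; exact hpq (hpe.trans hqe.symm)
    obtain ⟨p₁, p₂, hpsplit, hp₁last, hp₂head, -⟩ := exists_split hchp hvp
    obtain ⟨q₁, q₂, hqsplit, hq₁last, hq₂head, -⟩ := exists_split hchq hvq
    have hp₂ne : p₂ ≠ [] := split_right_ne_nil hord hchp hpsplit hp₁last hwp hvltw
    have hq₂ne : q₂ ≠ [] := split_right_ne_nil hord hchq hqsplit hq₁last hwq hvltw
    have hp₁ne : p₁ ≠ [] := by
      intro h
      subst h
      have hpp : p = p₂ := by simpa using hpsplit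
      obtain ⟨hd, t, hhd⟩ : ∃ hd t, p = hd :: t := by
        cases hl : p with
        | nil => exact absurd hl hppath.1
        | cons a t => exact ⟨a, t, rfl⟩
      have h1 : N.tail hd = N.segEnd (e n) := hp₂head hd (by rw [← hpp, hhd]; rfl)
      have h2 : N.tail hd = N.src ap := hppath.2.2.1 hd (by rw [hhd]; rfl)
      have h3 : N.src ap ∈ N.pathVerts q := by rw [← h2, h1]; exact hvq
      exact not_src_mem_path hqpath hapaq h3
    have hq₁ne : q₁ ≠ [] := by
      intro h
      subst h
      have hqq : q = q₂ := by simpa using hqsplit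
      obtain ⟨hd, t, hhd⟩ : ∃ hd t, q = hd :: t := by
        cases hl : q with
        | nil => exact absurd hl hqpath.1
        | cons a t => exact ⟨a, t, rfl⟩
      have h1 : N.tail hd = N.segEnd (e n) := hq₂head hd (by rw [← hqq, hhd]; rfl)
      have h2 : N.tail hd = N.src aq := hqpath.2.2.1 hd (by rw [hhd]; rfl)
      have h3 : N.src aq ∈ N.pathVerts p := by rw [← h2, h1]; exact hvp
      exact not_src_mem_path hppath (Ne.symm hapaq) h3
    have hp₁sub : ∀ x ∈ p₁, x ∈ p := by
      intro x hx; rw [hpsplit]; exact List.mem_append_left _ hx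
    have hp₂sub : ∀ x ∈ p₂, x ∈ p := by
      intro x hx; rw [hpsplit]; exact List.mem_append_right _ hx
    have hq₁sub : ∀ x ∈ q₁, x ∈ q := by
      intro x hx; rw [hqsplit]; exact List.mem_append_left _ hx
    have hq₂sub : ∀ x ∈ q₂, x ∈ q := by
      intro x hx; rw [hqsplit]; exact List.mem_append_right _ hx
    have hp₁₂ : ∀ x ∈ p₁, x ∉ p₂ := by
      intro x hx hx2
      have h1 := mem_left_head_le hord hchp hpsplit hp₁last hx
      have h2 := mem_right_tail_ge hord hchp hpsplit hp₂head hx2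
      exact absurd (hord x) (not_lt.mpr (le_trans h1 h2))
    have hq₁₂ : ∀ x ∈ q₁, x ∉ q₂ := by
      intro x hx hx2
      have h1 := mem_left_head_le hord hchq hqsplit hq₁last hx
      have h2 := mem_right_tail_ge hord hchq hqsplit hq₂head hx2
      exact absurd (hord x) (not_lt.mpr (le_trans h1 h2))
    have hpq' : ∀ x ∈ p, x ∉ q := by
      intro x hx
      rw [hpe] at hx; rw [hqe]
      exact hdisj cp ap aq hapaq x hx
    have hqp' : ∀ x ∈ q, x ∉ p := by
      intro x hx
      rw [hqe] at hx; rw [hpe]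
      exact hdisj cp aq ap (Ne.symm hapaq) x hx
    have hchp12 : List.Chain' (fun a b => N.head a = N.tail b) p₁ ∧
        List.Chain' (fun a b => N.head a = N.tail b) p₂ ∧
        ∀ x ∈ p₁.getLast?, ∀ y ∈ p₂.head?, N.head x = N.tail y := by
      have h : List.Chain' (fun a b => N.head a = N.tail b) (p₁ ++ p₂) := by
        rw [← hpsplit]; exact hchp
      exact List.isChain_append.mp h
    have hchq12 : List.Chain' (fun a b => N.head a = N.tail b) q₁ ∧
        List.Chain' (fun a b => N.head a = N.tail b) q₂ ∧
        ∀ x ∈ q₁.getLast?, ∀ y ∈ q₂.head?, N.head x = N.tail y := by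
      have h : List.Chain' (fun a b => N.head a = N.tail b) (q₁ ++ q₂) := by
        rw [← hqsplit]; exact hchq
      exact List.isChain_append.mp h
    have hPnpath : N.IsPathFrom (N.src ap) (N.snk cp) (p₁ ++ q₂) := by
      refine ⟨?_, ?_, ?_, ?_⟩
      · intro h; exact hp₁ne (List.append_eq_nil_iff.mp h).1
      · refine List.isChain_append.mpr ⟨hchp12.1, hchq12.2.1, ?_⟩
        intro x hx y hy
        rw [hp₁last x hx, hq₂head y hy]
      · intro a ha
        rw [head?_append_left hp₁ne] at ha
        apply hppath.2.2.1
        rw [hpsplit, head?_append_left hp₁ne]; exact ha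
      · intro a ha
        rw [getLast?_append_right hq₂ne] at ha
        apply hqpath.2.2.2
        rw [hqsplit, getLast?_append_right hq₂ne]; exact ha
    have hQnpath : N.IsPathFrom (N.src aq) (N.snk cp) (q₁ ++ p₂) := by
      refine ⟨?_, ?_, ?_, ?_⟩
      · intro h; exact hq₁ne (List.append_eq_nil_iff.mp h).1
      · refine List.isChain_append.mpr ⟨hchq12.1, hchp12.2.1, ?_⟩
        intro x hx y hy
        rw [hq₁last x hx, hp₂head y hy]
      · intro a ha
        rw [head?_append_left hq₁ne] at ha
        apply hqpath.2.2.1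
        rw [hqsplit, head?_append_left hq₁ne]; exact ha
      · intro a ha
        rw [getLast?_append_right hp₂ne] at ha
        apply hppath.2.2.2
        rw [hpsplit, getLast?_append_right hp₂ne]; exact ha
    have hPnOther : ∀ x ∈ p₁ ++ q₂, ∀ i, i ≠ ap → i ≠ aq → x ∉ P i cp := by
      intro x hx i h1 h2
      rcases List.mem_append.mp hx with h | h
      · have hxp := hp₁sub x h; rw [hpe] at hxp
        exact hdisj cp ap i (Ne.symm h1) x hxp
      · have hxq := hq₂sub x h; rw [hqe] at hxq
        exact hdisj cp aq i (Ne.symm h2) x hxq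
    have hQnOther : ∀ x ∈ q₁ ++ p₂, ∀ i, i ≠ ap → i ≠ aq → x ∉ P i cp := by
      intro x hx i h1 h2
      rcases List.mem_append.mp hx with h | h
      · have hxq := hq₁sub x h; rw [hqe] at hxq
        exact hdisj cp aq i (Ne.symm h2) x hxq
      · have hxp := hp₂sub x h; rw [hpe] at hxp
        exact hdisj cp ap i (Ne.symm h1) x hxp
    have hPnQn : ∀ x ∈ p₁ ++ q₂, x ∉ q₁ ++ p₂ := by
      intro x hx hx'
      rcases List.mem_append.mp hx with h | h <;> rcases List.mem_append.mp hx' with h' | h'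
      · exact hpq' x (hp₁sub x h) (hq₁sub x h')
      · exact hp₁₂ x h h'
      · exact hq₁₂ x h' h
      · exact hqp' x (hq₂sub x h) (hp₂sub x h')
    have hQQpaths : ∀ i, N.IsPathFrom (N.src i) (N.snk cp)
        (if i = ap then p₁ ++ q₂ else if i = aq then q₁ ++ p₂ else P i cp) := by
      intro i
      by_cases h1 : i = ap
      · rw [if_pos h1, h1]; exact hPnpath
      · by_cases h2 : i = aq
        · rw [if_neg h1, if_pos h2, h2]; exact hQnpath
        · rw [if_neg h1, if_neg h2]; exact hpaths i cp
    have hQQdisj : ∀ i i', i ≠ i' →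
        ∀ x ∈ (if i = ap then p₁ ++ q₂ else if i = aq then q₁ ++ p₂ else P i cp),
          x ∉ (if i' = ap then p₁ ++ q₂ else if i' = aq then q₁ ++ p₂ else P i' cp) := by
      intro i i' hii x hxi hxi'
      by_cases h1 : i = ap
      · rw [if_pos h1] at hxi
        by_cases h4 : i' = aq
        · rw [if_neg (by rw [h4]; exact Ne.symm hapaq), if_pos h4] at hxi'
          exact hPnQn x hxi hxi'
        · have h2 : i' ≠ ap := fun hh => hii (h1.trans hh.symm)
          rw [if_neg h2, if_neg h4] at hxi'
          exact hPnOther x hxi i' h2 h4 hxi'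
      · by_cases h3 : i = aq
        · rw [if_neg h1, if_pos h3] at hxi
          by_cases h2 : i' = ap
          · rw [if_pos h2] at hxi'
            exact hPnQn x hxi' hxi
          · by_cases h4 : i' = aq
            · exact absurd (h3.trans h4.symm) hii
            · rw [if_neg h2, if_neg h4] at hxi'
              exact hQnOther x hxi i' h2 h4 hxi'
        · rw [if_neg h1, if_neg h3] at hxi
          by_cases h2 : i' = ap
          · rw [if_pos h2] at hxi'
            exact hPnOther x hxi' i h1 h3 hxi
          · by_cases h4 : i' = aq
            · rw [if_neg h2, if_pos h4] at hxi'
              exact hQnOther x hxi' i h1 h3 hxi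
            · rw [if_neg h2, if_neg h4] at hxi'
              exact hdisj cp i i' hii x hxi hxi'
    have hans := huniq cp _ hQQpaths hQQdisj ap
    rw [if_pos rfl] at hans
    have hPnp : p₁ ++ q₂ = p₁ ++ p₂ := by rw [hans, ← hpe, hpsplit]
    have hq₂p₂ : q₂ = p₂ := List.append_cancel_left hPnp
    obtain ⟨hd, t, hhd⟩ : ∃ hd t, q₂ = hd :: t := by
      cases hl : q₂ with
      | nil => exact absurd hl hq₂ne
      | cons a t => exact ⟨a, t, rfl⟩
    have hdq : hd ∈ q := hq₂sub hd (by rw [hhd]; simp)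
    have hdp : hd ∈ p := hp₂sub hd (by rw [← hq₂p₂, hhd]; simp)
    exact hqp' hd hdq hdp
  · -- p and q point to different sinks
    obtain ⟨p₁, p₂, hpsplit, hp₁last, hp₂head, -⟩ := exists_split hchp hvp
    have hp₂ne : p₂ ≠ [] := split_right_ne_nil hord hchp hpsplit hp₁last hwp hvltw
    have hchp' : List.Chain' (fun a b => N.head a = N.tail b) (p₁ ++ p₂) := by
      rw [← hpsplit]; exact hchp
    have hchp2 := (List.isChain_append.mp hchp').2.1
    have hwp₂ : (e (n + 1)).1 ∈ N.pathVerts p₂ := by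
      have h' : (e (n + 1)).1 ∈ N.pathVerts (p₁ ++ p₂) := by rw [← hpsplit]; exact hwp
      rw [pathVerts_append] at h'
      rcases h' with h | h
      · exfalso
        have h₁ne : p₁ ≠ [] := by rintro rfl; obtain ⟨a, ha, -⟩ := h; cases ha
        have hlast : p₁.getLast? = some (p₁.getLast h₁ne) := List.getLast?_eq_getLast h₁ne
        have hb := vert_le_getLast hord (List.isChain_append.mp hchp').1
          (by rw [hlast]; rfl) h
        rw [hp₁last _ (by rw [hlast]; rfl)] at hb
        exact absurd hvltw (not_lt.mpr hb)
      · exact h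
    obtain ⟨pm, p₃, hp₂split, hpmlast, hp₃head, -⟩ := exists_split hchp2 hwp₂
    have hvp₂ : N.segEnd (e n) ∈ N.pathVerts p₂ := by
      obtain ⟨hd, t, hhd⟩ : ∃ hd t, p₂ = hd :: t := by
        cases hl : p₂ with
        | nil => exact absurd hl hp₂ne
        | cons a t => exact ⟨a, t, rfl⟩
      exact ⟨hd, by rw [hhd]; simp, Or.inl (hp₂head hd (by rw [hhd]; rfl)).symm⟩
    have hpmne : pm ≠ [] := split_left_ne_nil hord hchp2 hp₂split hp₃head hvp₂ hvltw
    have hpm_tail : ∀ a ∈ pm, ord (N.segEnd (e n)) ≤ ord (N.tail a) := by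
      intro a ha
      refine mem_right_tail_ge hord hchp hpsplit hp₂head ?_
      rw [hp₂split]; exact List.mem_append_left _ ha
    have hpm_head : ∀ a ∈ pm, ord (N.head a) ≤ ord (e (n + 1)).1 := fun a ha =>
      mem_left_head_le hord hchp2 hp₂split hpmlast ha
    have hpmsub : ∀ a ∈ pm, a ∈ p := by
      intro a ha
      rw [hpsplit, hp₂split]
      exact List.mem_append_right _ (List.mem_append_left _ ha)
    by_cases hconf : ∃ z ∈ pm, ∃ jg : Fin 3, z ∈ P jg cq
    · -- a pair-l.c.s. through z would lie strictly between e n and e (n+1) on p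
      obtain ⟨z, hzpm, jg, hzg⟩ := hconf
      have hzp : z ∈ p := hpmsub z hzpm
      obtain ⟨S, hSlcs, hzS⟩ := exists_lcs_containing (N := N) z hzp hzg
      have hSpair : N.IsPairLCSOn P 0 1 p S := by
        constructor
        · rcases hcp with h0 | h1
          · have hcq1 : cq = 1 := by
              rcases hcq with h | h
              · exact absurd (h0.trans h.symm) hcc
              · exact h
            refine ⟨ap, jg, ?_⟩
            have hset : ({P ap 0, P jg 1} : Set (List N.A)) = {p, P jg cq} := by
              rw [hpe, h0, hcq1]
            rw [hset]; exact hSlcs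
          · have hcq0 : cq = 0 := by
              rcases hcq with h | h
              · exact h
              · exact absurd (h1.trans h.symm) hcc
            refine ⟨jg, ap, ?_⟩
            have hset : ({P jg 0, P ap 1} : Set (List N.A)) = {p, P jg cq} := by
              rw [hpe, h1, hcq0, Set.pair_comm]
            rw [hset]; exact hSlcs
        · exact hSlcs.2.1 p (by simp)
      obtain ⟨m, hmL, hmS⟩ := he2 S hSpair
      have hSseg : N.IsSeg S := hSlcs.1
      have h1 : ord (N.segEnd (e n)) < ord (N.head z) :=
        lt_of_le_of_lt (hpm_tail z hzpm) (hord z)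
      have h2 : ord (N.tail z) < ord (e (n + 1)).1 :=
        lt_of_lt_of_le (hord z) (hpm_head z hzpm)
      have hAstart : ord (e n).1 ≤ ord (N.segEnd (e n)) := seg_ord_startEnd hord hAseg
      have hBend : ord (e (n + 1)).1 ≤ ord (N.segEnd (e (n + 1))) :=
        seg_ord_startEnd hord hBseg
      rcases Nat.lt_trichotomy m n with hm | hm | hm
      · have hst := strictlyBefore_ord hord hchp (he3 m n hm hnL)
        rw [hmS] at hst
        have h3 : ord (N.head z) ≤ ord (N.segEnd S) := seg_ord_end hord hSseg hzS
        linarith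
      · rw [hm] at hmS
        have h3 : ord (N.head z) ≤ ord (N.segEnd (e n)) :=
          seg_ord_end hord hAseg (by rw [hmS]; exact hzS)
        linarith
      · rcases Nat.lt_trichotomy m (n + 1) with hm1 | hm1 | hm1
        · omega
        · rw [hm1] at hmS
          have h3 : ord (e (n + 1)).1 ≤ ord (N.tail z) :=
            seg_ord_start hord hBseg (by rw [hmS]; exact hzS)
          linarith
        · have hst := strictlyBefore_ord hord hchp (he3 (n + 1) m hm1 hmL)
          rw [hmS] at hst
          have h3 : ord S.1 ≤ ord (N.tail z) := seg_ord_start hord hSseg hzS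
          linarith
    · -- reroute q through the middle part of p: contradicts stability
      push_neg at hconf
      obtain ⟨q₁, q₂, hqsplit, hq₁last, hq₂head, -⟩ := exists_split hchq hvq
      have hq₂ne : q₂ ≠ [] := split_right_ne_nil hord hchq hqsplit hq₁last hwq hvltw
      have hchq' : List.Chain' (fun a b => N.head a = N.tail b) (q₁ ++ q₂) := by
        rw [← hqsplit]; exact hchq
      have hchq2 := (List.isChain_append.mp hchq').2.1
      have hwq₂ : (e (n + 1)).1 ∈ N.pathVerts q₂ := by
        have h' : (e (n + 1)).1 ∈ N.pathVerts (q₁ ++ q₂) := by rw [← hqsplit]; exact hwq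
        rw [pathVerts_append] at h'
        rcases h' with h | h
        · exfalso
          have h₁ne : q₁ ≠ [] := by rintro rfl; obtain ⟨a, ha, -⟩ := h; cases ha
          have hlast : q₁.getLast? = some (q₁.getLast h₁ne) := List.getLast?_eq_getLast h₁ne
          have hb := vert_le_getLast hord (List.isChain_append.mp hchq').1
            (by rw [hlast]; rfl) h
          rw [hq₁last _ (by rw [hlast]; rfl)] at hb
          exact absurd hvltw (not_lt.mpr hb)
        · exact h
      obtain ⟨qm, q₃, hq₂split, hqmlast, hq₃head, hqor⟩ := exists_split hchq2 hwq₂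
      have hq₃ne : q₃ ≠ [] := by
        intro h
        subst h
        have hqmne : qm ≠ [] := by
          rcases hqor with h | h
          · exact h
          · exact absurd rfl h
        have hq₂m : q₂ = qm := by rw [hq₂split, List.append_nil]
        have hqlne : qm.getLast? = some (qm.getLast hqmne) := List.getLast?_eq_getLast hqmne
        have hlastq : q.getLast? = qm.getLast? := by
          rw [hqsplit, hq₂m, getLast?_append_right hqmne]
        have hw1 : N.head (qm.getLast hqmne) = (e (n + 1)).1 :=
          hqmlast _ (by rw [hqlne]; rfl)
        have hw2 : N.head (qm.getLast hqmne) = N.snk cq :=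
          hqpath.2.2.2 _ (by rw [hlastq, hqlne]; rfl)
        have h3 : N.snk cq ∈ N.pathVerts p := by rw [← hw2, hw1]; exact hwp
        exact not_snk_mem_path hppath (Ne.symm hcc) h3
      have hpmq₃ne : pm ++ q₃ ≠ [] := by
        intro h; exact hpmne (List.append_eq_nil_iff.mp h).1
      have hpmhead' : ∀ a ∈ pm.head?, N.tail a = N.segEnd (e n) := by
        intro a ha
        apply hp₂head
        rw [hp₂split, head?_append_left hpmne]; exact ha
      have hGpath : N.IsPathFrom (N.src aq) (N.snk cq) (q₁ ++ (pm ++ q₃)) := by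
        refine ⟨?_, ?_, ?_, ?_⟩
        · intro h
          exact hpmq₃ne (List.append_eq_nil_iff.mp h).2
        · refine List.isChain_append.mpr ⟨(List.isChain_append.mp hchq').1, ?_, ?_⟩
          · refine List.isChain_append.mpr
              ⟨(List.isChain_append.mp (by rw [← hp₂split]; exact hchp2)).1,
               (List.isChain_append.mp (by rw [← hq₂split]; exact hchq2)).2.1, ?_⟩
            intro x hx y hy
            rw [hpmlast x hx, hq₃head y hy]
          · intro x hx y hy
            rw [head?_append_left hpmne] at hy
            rw [hq₁last x hx, hpmhead' y hy]
        · intro a ha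
          by_cases hq₁ne : q₁ = []
          · subst hq₁ne
            rw [List.nil_append, head?_append_left hpmne] at ha
            have h1 : N.tail a = N.segEnd (e n) := hpmhead' a ha
            have hq2 : q = q₂ := by simpa using hqsplit
            obtain ⟨hd, t, hhd⟩ : ∃ hd t, q₂ = hd :: t := by
              cases hl : q₂ with
              | nil => exact absurd hl hq₂ne
              | cons b t => exact ⟨b, t, rfl⟩
            have h2 : N.tail hd = N.segEnd (e n) := hq₂head hd (by rw [hhd]; rfl)
            have h3 : N.tail hd = N.src aq := hqpath.2.2.1 hd (by rw [hq2, hhd]; rfl)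
            rw [h1, ← h2, h3]
          · rw [head?_append_left hq₁ne] at ha
            apply hqpath.2.2.1
            rw [hqsplit, head?_append_left hq₁ne]; exact ha
        · intro a ha
          rw [getLast?_append_right hpmq₃ne, getLast?_append_right hq₃ne] at ha
          apply hqpath.2.2.2
          have hqmq₃ne : qm ++ q₃ ≠ [] := by
            intro h; exact hq₃ne (List.append_eq_nil_iff.mp h).2
          rw [hqsplit, hq₂split, getLast?_append_right hqmq₃ne,
            getLast?_append_right hq₃ne]
          exact ha
      have hq₁sub : ∀ x ∈ q₁, x ∈ q := by
        intro x hx; rw [hqsplit]; exact List.mem_append_left _ hx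
      have hq₃sub : ∀ x ∈ q₃, x ∈ q := by
        intro x hx; rw [hqsplit, hq₂split]
        exact List.mem_append_right _ (List.mem_append_right _ hx)
      have hGmem : ∀ x ∈ q₁ ++ (pm ++ q₃), x ∈ q ∨ x ∈ pm := by
        intro x hx
        rcases List.mem_append.mp hx with h | h
        · exact Or.inl (hq₁sub x h)
        · rcases List.mem_append.mp h with h' | h'
          · exact Or.inr h'
          · exact Or.inl (hq₃sub x h')
      have hQQpaths : ∀ i, N.IsPathFrom (N.src i) (N.snk cq)
          (if i = aq then q₁ ++ (pm ++ q₃) else P i cq) := by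
        intro i
        by_cases h : i = aq
        · rw [if_pos h, h]; exact hGpath
        · rw [if_neg h]; exact hpaths i cq
      have hQQdisj : ∀ i i', i ≠ i' →
          ∀ x ∈ (if i = aq then q₁ ++ (pm ++ q₃) else P i cq),
            x ∉ (if i' = aq then q₁ ++ (pm ++ q₃) else P i' cq) := by
        intro i i' hii x hxi hxi'
        by_cases h : i = aq
        · rw [if_pos h] at hxi
          have h'' : i' ≠ aq := fun hh => hii (h.trans hh.symm)
          rw [if_neg h''] at hxi'
          rcases hGmem x hxi with hxq | hxpm
          · rw [hqe] at hxq
            exact hdisj cq aq i' (Ne.symm h'') x hxq hxi'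
          · exact hconf x hxpm i' hxi'
        · rw [if_neg h] at hxi
          by_cases h' : i' = aq
          · rw [if_pos h'] at hxi'
            rcases hGmem x hxi' with hxq | hxpm
            · rw [hqe] at hxq
              exact hdisj cq aq i (Ne.symm h) x hxq hxi
            · exact hconf x hxpm i hxi
          · rw [if_neg h'] at hxi'
            exact hdisj cq i i' hii x hxi hxi'
      have hans := huniq cq _ hQQpaths hQQdisj aq
      rw [if_pos rfl] at hans
      obtain ⟨hd, t, hhd⟩ : ∃ hd t, pm = hd :: t := by
        cases hl : pm with
        | nil => exact absurd hl hpmne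
        | cons a t => exact ⟨a, t, rfl⟩
      have hhdpm : hd ∈ pm := by rw [hhd]; simp
      have hhdG : hd ∈ q₁ ++ (pm ++ q₃) :=
        List.mem_append_right _ (List.mem_append_left _ hhdpm)
      rw [hans] at hhdG
      exact hconf hd hhdpm aq hhdG
end

section
/- Let N be a stable 3-pair network with fixed paths r_i = P_{s_i,t_1}, g_i = P_{s_i,t_2}. If there exists i with ℓ(r_i) = 1, then there exists j ≠ i with ℓ(g_j) = 1; symmetrically, if there exists i with ℓ(g_i) = 1, then there exists j ≠ i with ℓ(r_j) = 1. -/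
open scoped BigOperators

namespace KPairNetwork

variable {k : ℕ} (N : KPairNetwork k)

/-- The vertex sequence of a list of arcs starting at `u`. -/
def vseq (u : N.V) (l : List N.A) : List N.V := u :: l.map N.head

/-- A (possibly empty) walk from `u` to `v`. -/
def Walk (u v : N.V) (l : List N.A) : Prop :=
  l.Chain' (fun a b => N.head a = N.tail b) ∧
  (∀ a ∈ l.head?, N.tail a = u) ∧ (∀ a ∈ l.getLast?, N.head a = v) ∧
  (l = [] → u = v)

variable {N}

lemma isPathFrom_iff_walk {u v : N.V} {l : List N.A} :
    N.IsPathFrom u v l ↔ N.Walk u v l ∧ l ≠ [] := by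
  unfold IsPathFrom Walk
  constructor
  · rintro ⟨h1, h2, h3, h4⟩; exact ⟨⟨h2, h3, h4, fun h => absurd h h1⟩, h1⟩
  · rintro ⟨⟨h2, h3, h4, _⟩, h1⟩; exact ⟨h1, h2, h3, h4⟩

@[simp] lemma vseq_length (u : N.V) (l : List N.A) :
    (N.vseq u l).length = l.length + 1 := by simp [vseq]

lemma vseq_getElem_zero (u : N.V) (l : List N.A) :
    (N.vseq u l)[0] = u := rfl

lemma vseq_getElem_succ (u : N.V) (l : List N.A) {q : ℕ} (hq : q < l.length) :
    (N.vseq u l)[q + 1]'(by simp; omega) = N.head (l[q]) := by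
  simp [vseq]

lemma Walk.chain' {u v : N.V} {l : List N.A} (h : N.Walk u v l) :
    l.Chain' (fun a b => N.head a = N.tail b) := h.1

lemma Walk.tail_getElem {u v : N.V} {l : List N.A} (h : N.Walk u v l)
    {q : ℕ} (hq : q < l.length) :
    N.tail (l[q]) = (N.vseq u l)[q]'(by simp; omega) := by
  induction l generalizing u q with
  | nil => simp at hq
  | cons a l ih =>
    rcases q with _ | q
    · simpa [vseq] using h.2.1 a rfl
    · have hchain := h.1
      have hwalk : N.Walk (N.head a) v l := by
        refine ⟨hchain.tail, ?_, ?_, ?_⟩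
        · intro b hb
          cases l with
          | nil => simp at hb
          | cons c l' =>
            simp at hb; subst hb
            exact (List.isChain_cons_cons.mp hchain).1.symm
        · intro b hb
          exact h.2.2.1 b (by
            cases l with
            | nil => simp at hb
            | cons c l' => simpa [List.getLast?_cons_cons] using hb)
        · intro hl; subst hl; simp at hq
      have hq' : q < l.length := by simpa using hq
      have := ih hwalk hq'
      simpa [vseq, List.getElem_cons_succ] using this

lemma Walk.head_getElem {u v : N.V} {l : List N.A} (_ : N.Walk u v l)
    {q : ℕ} (hq : q < l.length) :
    N.head (l[q]) = (N.vseq u l)[q + 1]'(by simp; omega) := by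
  simp [vseq]

lemma Walk.vseq_last {u v : N.V} {l : List N.A} (h : N.Walk u v l) :
    (N.vseq u l)[l.length]'(by simp) = v := by
  cases l with
  | nil => exact h.2.2.2 rfl
  | cons a l' =>
    have hne : (a :: l') ≠ [] := by simp
    have hlast : (a :: l').getLast hne ∈ (a :: l').getLast? := by
      simp [List.getLast?_eq_getLast]
    have hv := h.2.2.1 _ hlast
    rw [← hv, List.getLast_eq_getElem]
    show (u :: (a :: l').map N.head)[l'.length + 1] = _
    rw [List.getElem_cons_succ, List.getElem_map]
    congr 1

lemma Walk.vseq_nodup {u v : N.V} {l : List N.A} (h : N.Walk u v l) :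
    (N.vseq u l).Nodup := by
  obtain ⟨ord, hord⟩ := N.acyclic
  have hchain : (N.vseq u l).Chain' (fun x y => ord x < ord y) := by
    refine List.isChain_iff_getElem.mpr ?_
    intro q hq
    have hq' : q < l.length := by simpa using hq
    rw [← h.tail_getElem hq', ← h.head_getElem hq']
    exact hord _
  have : IsTrans N.V (fun x y => ord x < ord y) := ⟨fun _ _ _ h1 h2 => h1.trans h2⟩
  have : Trans (fun x y : N.V => ord x < ord y) (fun x y => ord x < ord y) (fun x y => ord x < ord y) := ⟨fun h1 h2 => h1.trans h2⟩
  have hpw := List.isChain_iff_pairwise.mp hchain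
  exact hpw.imp (fun hlt => fun he => by subst he; exact lt_irrefl _ hlt)

lemma Walk.nodup {u v : N.V} {l : List N.A} (h : N.Walk u v l) : l.Nodup := by
  have hmap : (l.map N.tail) = (N.vseq u l).take l.length := by
    apply List.ext_getElem
    · simp
    · intro q h1 h2
      simp only [List.getElem_map, List.getElem_take]
      exact h.tail_getElem (by simpa using h1)
  have : (l.map N.tail).Nodup := by
    rw [hmap]; exact h.vseq_nodup.sublist (List.take_sublist _ _)
  exact this.of_map N.tail

lemma tail_mem_pathVerts {l : List N.A} {a : N.A} (ha : a ∈ l) :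
    N.tail a ∈ N.pathVerts l := ⟨a, ha, Or.inl rfl⟩

lemma head_mem_pathVerts {l : List N.A} {a : N.A} (ha : a ∈ l) :
    N.head a ∈ N.pathVerts l := ⟨a, ha, Or.inr rfl⟩

lemma Walk.mem_pathVerts_iff {u v : N.V} {l : List N.A} (h : N.Walk u v l)
    (hl : l ≠ []) {x : N.V} : x ∈ N.pathVerts l ↔ x ∈ N.vseq u l := by
  constructor
  · rintro ⟨a, ha, hx | hx⟩
    · obtain ⟨q, hq, rfl⟩ := List.mem_iff_getElem.mp ha
      subst hx
      rw [h.tail_getElem hq]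
      exact List.getElem_mem _
    · subst hx
      exact List.mem_cons_of_mem _ (List.mem_map_of_mem (f := N.head) ha)
  · intro hx
    rcases List.mem_cons.mp hx with rfl | hx
    · have : l.head hl ∈ l.head? := by rw [List.head?_eq_head hl]; rfl
      have ht := h.2.1 _ this
      exact ⟨l.head hl, List.head_mem hl, Or.inl ht.symm⟩
    · obtain ⟨a, ha, rfl⟩ := List.mem_map.mp hx
      exact ⟨a, ha, Or.inr rfl⟩

lemma Walk.append {u v w : N.V} {l m : List N.A}
    (h1 : N.Walk u v l) (h2 : N.Walk v w m) : N.Walk u w (l ++ m) := by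
  refine ⟨?_, ?_, ?_, ?_⟩
  · refine List.isChain_append.mpr ?_
    refine ⟨h1.1, h2.1, ?_⟩
    intro x hx y hy
    rw [h1.2.2.1 x hx, h2.2.1 y hy]
  · intro a ha
    cases l with
    | nil =>
      simp only [List.nil_append] at ha
      rw [h2.2.1 a ha, ← h1.2.2.2 rfl]
    | cons b l' =>
      simp at ha
      subst ha
      exact h1.2.1 _ rfl
  · intro a ha
    cases m with
    | nil =>
      simp only [List.append_nil] at ha
      rw [h1.2.2.1 a ha, h2.2.2.2 rfl]
    | cons b m' =>
      have : (l ++ b :: m').getLast? = (b :: m').getLast? := by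
        rw [List.getLast?_append_of_ne_nil]; simp
      rw [this] at ha
      exact h2.2.2.1 a ha
  · intro hlm
    have hl : l = [] := by simpa using (List.append_eq_nil_iff.mp hlm).1
    have hm : m = [] := by simpa using (List.append_eq_nil_iff.mp hlm).2
    rw [h1.2.2.2 hl, h2.2.2.2 hm]

lemma Walk.take {u v : N.V} {l : List N.A} (h : N.Walk u v l)
    {n : ℕ} (hn : n ≤ l.length) :
    N.Walk u ((N.vseq u l)[n]'(by simp; omega)) (l.take n) := by
  refine ⟨h.1.take n, ?_, ?_, ?_⟩
  · intro a ha
    rw [List.head?_take] at ha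
    split at ha
    · simp at ha
    · exact h.2.1 a ha
  · intro a ha
    rcases Nat.eq_zero_or_pos n with rfl | hpos
    · simp at ha
    have hlt : n - 1 < l.length := by omega
    have htk : (l.take n).getLast? = some (l[n-1]) := by
      rw [List.getLast?_eq_getElem?]
      have hlen : (l.take n).length = n := by simp; omega
      rw [hlen]
      rw [List.getElem?_eq_getElem (by simp; omega)]
      congr 1
      simp [List.getElem_take]
    rw [htk] at ha
    simp only [Option.mem_def, Option.some.injEq] at ha
    subst ha
    rw [h.head_getElem hlt]
    congr 1
    omega
  · intro hemp
    have : n = 0 := by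
      by_contra hne
      have : l = [] := by
        rcases l with _ | _
        · rfl
        · simp at hemp; omega
      subst this; simp at hn; omega
    subst this
    rfl

lemma vseq_drop {u v : N.V} {l : List N.A} (h : N.Walk u v l)
    {n : ℕ} (hn : n ≤ l.length) :
    N.vseq ((N.vseq u l)[n]'(by simp; omega)) (l.drop n) = (N.vseq u l).drop n := by
  apply List.ext_getElem
  · simp; omega
  · intro q h1 h2
    cases q with
    | zero =>
      rw [List.getElem_drop]
      simp [vseq]
    | succ q =>
      have hq1 : q < (l.drop n).length := by simp at h1 ⊢; omega
      rw [vseq_getElem_succ _ _ hq1, List.getElem_drop, List.getElem_drop]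
      have hlt : n + q < l.length := by simp at hq1; omega
      rw [h.head_getElem hlt]
      congr 1

lemma Walk.drop {u v : N.V} {l : List N.A} (h : N.Walk u v l)
    {n : ℕ} (hn : n ≤ l.length) :
    N.Walk ((N.vseq u l)[n]'(by simp; omega)) v (l.drop n) := by
  refine ⟨h.1.drop n, ?_, ?_, ?_⟩
  · intro a ha
    rcases Nat.lt_or_ge n l.length with hlt | hge
    · have : (l.drop n).head? = some (l[n]) := by
        rw [List.head?_eq_getElem?]
        rw [List.getElem?_drop]
        simp [List.getElem?_eq_getElem hlt]
      rw [this] at ha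
      simp only [Option.mem_def, Option.some.injEq] at ha
      subst ha
      exact h.tail_getElem hlt
    · have : l.drop n = [] := by simp; omega
      rw [this] at ha; simp at ha
  · intro a ha
    apply h.2.2.1
    rw [List.getLast?_drop] at ha
    split at ha
    · simp at ha
    · exact ha
  · intro hemp
    have : n = l.length := by
      have := (List.length_drop : (l.drop n).length = _) ▸ congrArg List.length hemp
      simp at this; omega
    subst this
    exact h.vseq_last

lemma Walk.infix {u v : N.V} {l : List N.A} (h : N.Walk u v l)
    {n m : ℕ} (hnm : n ≤ m) (hm : m ≤ l.length) :
    N.Walk ((N.vseq u l)[n]'(by simp; omega)) ((N.vseq u l)[m]'(by simp; omega))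
      ((l.drop n).take (m - n)) := by
  have hd := h.drop (le_trans hnm hm)
  have ht := hd.take (n := m - n) (by simp; omega)
  have hveq : N.vseq ((N.vseq u l)[n]'(by simp; omega)) (l.drop n) =
      (N.vseq u l).drop n := vseq_drop h (le_trans hnm hm)
  have he : (N.vseq ((N.vseq u l)[n]'(by simp; omega)) (l.drop n))[m - n]'(by
      rw [hveq]; simp; omega) = (N.vseq u l)[m]'(by simp; omega) := by
    have := List.getElem_of_eq hveq (i := m - n) (by rw [hveq]; simp; omega)
    rw [this, List.getElem_drop]
    congr 1
    omega
  rw [he] at ht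
  exact ht

section Stability

variable {k : ℕ} {N : KPairNetwork k} {P : Fin k → Fin k → List N.A}

lemma Walk.snk_not_mem {j j' : Fin k} (hjj : j ≠ j') {u : N.V} {p : List N.A}
    (h : N.Walk u (N.snk j') p) : N.snk j ∉ N.pathVerts p := by
  rintro ⟨a, ha, hx | hx⟩
  · exact N.snk_no_out j a hx.symm
  · obtain ⟨q, hq, rfl⟩ := List.mem_iff_getElem.mp ha
    rcases Nat.lt_or_ge (q + 1) p.length with hlt | hge
    · have h1 := h.head_getElem hq
      have h2 := h.tail_getElem hlt
      exact N.snk_no_out j (p[q+1]) (by rw [h2, ← h1, ← hx])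
    · have hq1 : q + 1 = p.length := by omega
      have h1 := h.head_getElem hq
      have h2 : (N.vseq u p)[q+1]'(by simp; omega) = (N.vseq u p)[p.length]'(by simp) := by
        congr 1
      rw [h1, h2, h.vseq_last] at hx
      exact hjj (N.snk_inj hx)

lemma walkP (hP : N.IsStableSystem P) (i j : Fin k) :
    N.Walk (N.src i) (N.snk j) (P i j) := (isPathFrom_iff_walk.mp (hP.1.1 i j)).1

lemma neNilP (hP : N.IsStableSystem P) (i j : Fin k) : P i j ≠ [] :=
  (isPathFrom_iff_walk.mp (hP.1.1 i j)).2

lemma stable_pathVerts_disjoint (hP : N.IsStableSystem P) {j : Fin k} {a b : Fin k}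
    (hab : a ≠ b) {v : N.V} (hva : v ∈ N.pathVerts (P a j))
    (hvb : v ∈ N.pathVerts (P b j)) : v = N.snk j := by
  classical
  by_contra hv
  have wa := walkP hP a j
  have wb := walkP hP b j
  have hd := hP.1.2 j
  obtain ⟨n, hn', hvn⟩ := List.mem_iff_getElem.mp
    ((wa.mem_pathVerts_iff (neNilP hP a j)).mp hva)
  obtain ⟨m, hm', hvm⟩ := List.mem_iff_getElem.mp
    ((wb.mem_pathVerts_iff (neNilP hP b j)).mp hvb)
  have hn2 : n ≤ (P a j).length := by simpa using Nat.lt_succ_iff.mp (by simpa using hn')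
  have hm2 : m ≤ (P b j).length := by simpa using Nat.lt_succ_iff.mp (by simpa using hm')
  have hnlt : n < (P a j).length := by
    rcases lt_or_eq_of_le hn2 with h | h
    · exact h
    · exfalso; apply hv; rw [← hvn]; subst h; exact wa.vseq_last
  have hmlt : m < (P b j).length := by
    rcases lt_or_eq_of_le hm2 with h | h
    · exact h
    · exfalso; apply hv; rw [← hvm]; subst h; exact wb.vseq_last
  set Q : Fin k → List N.A := fun x =>
    if x = a then (P a j).take n ++ (P b j).drop m
    else if x = b then (P b j).take m ++ (P a j).drop n
    else P x j with hQ
  have hQa : Q a = (P a j).take n ++ (P b j).drop m := by simp [hQ]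
  have hQb : Q b = (P b j).take m ++ (P a j).drop n := by simp [hQ, hab.symm]
  have hQo : ∀ x, x ≠ a → x ≠ b → Q x = P x j := by
    intro x h1 h2; simp [hQ, h1, h2]
  have hwQa : N.Walk (N.src a) (N.snk j) (Q a) := by
    rw [hQa]
    refine Walk.append (wa.take hn2) ?_
    have hdrop := wb.drop hm2
    rw [hvm] at hdrop
    rw [hvn]
    exact hdrop
  have hwQb : N.Walk (N.src b) (N.snk j) (Q b) := by
    rw [hQb]
    refine Walk.append (wb.take hm2) ?_
    have hdrop := wa.drop hn2
    rw [hvn] at hdrop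
    rw [hvm]
    exact hdrop
  have hQpaths : ∀ i, N.IsPathFrom (N.src i) (N.snk j) (Q i) := by
    intro i
    by_cases h1 : i = a
    · subst h1
      refine isPathFrom_iff_walk.mpr ⟨hwQa, ?_⟩
      rw [hQa]
      intro hemp
      have := (List.append_eq_nil_iff.mp hemp).2
      rw [List.drop_eq_nil_iff] at this
      omega
    by_cases h2 : i = b
    · subst h2
      refine isPathFrom_iff_walk.mpr ⟨hwQb, ?_⟩
      rw [hQb]
      intro hemp
      have := (List.append_eq_nil_iff.mp hemp).2
      rw [List.drop_eq_nil_iff] at this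
      omega
    · rw [hQo i h1 h2]; exact hP.1.1 i j
  have hmemQ : ∀ x, ∀ e ∈ Q x, e ∈ P a j ∨ e ∈ P b j ∨ (x ≠ a ∧ x ≠ b ∧ e ∈ P x j) := by
    intro x e he
    by_cases h1 : x = a
    · subst h1; rw [hQa] at he
      rcases List.mem_append.mp he with h | h
      · exact Or.inl (List.mem_of_mem_take h)
      · exact Or.inr (Or.inl (List.mem_of_mem_drop h))
    by_cases h2 : x = b
    · subst h2; rw [hQb] at he
      rcases List.mem_append.mp he with h | h
      · exact Or.inr (Or.inl (List.mem_of_mem_take h))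
      · exact Or.inl (List.mem_of_mem_drop h)
    · rw [hQo x h1 h2] at he; exact Or.inr (Or.inr ⟨h1, h2, he⟩)
  have hQdisj : ∀ i i', i ≠ i' → ∀ e : N.A, e ∈ Q i → e ∉ Q i' := by
    intro i i' hii e hei hei'
    by_cases h1 : a = i
    · subst h1
      rw [hQa] at hei
      by_cases h2 : b = i'
      · subst h2
        rw [hQb] at hei'
        rcases List.mem_append.mp hei with ha1 | ha2 <;>
          rcases List.mem_append.mp hei' with hb1 | hb2
        · exact hd a b hab e (List.mem_of_mem_take ha1) (List.mem_of_mem_take hb1)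
        · exact List.disjoint_take_drop wa.nodup le_rfl ha1 hb2
        · exact List.disjoint_take_drop wb.nodup le_rfl hb1 ha2
        · exact hd b a hab.symm e (List.mem_of_mem_drop ha2) (List.mem_of_mem_drop hb2)
      · rw [hQo i' (Ne.symm hii) (fun hh => h2 hh.symm)] at hei'
        rcases List.mem_append.mp hei with ha1 | ha2
        · exact hd a i' hii e (List.mem_of_mem_take ha1) hei'
        · exact hd b i' (fun hh => h2 hh) e (List.mem_of_mem_drop ha2) hei'
    by_cases h2 : b = i
    · subst h2
      rw [hQb] at hei
      by_cases h3 : a = i'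
      · subst h3
        rw [hQa] at hei'
        rcases List.mem_append.mp hei with hb1 | hb2 <;>
          rcases List.mem_append.mp hei' with ha1 | ha2
        · exact hd b a hab.symm e (List.mem_of_mem_take hb1) (List.mem_of_mem_take ha1)
        · exact List.disjoint_take_drop wb.nodup le_rfl hb1 ha2
        · exact List.disjoint_take_drop wa.nodup le_rfl ha1 hb2
        · exact hd a b hab e (List.mem_of_mem_drop hb2) (List.mem_of_mem_drop ha2)
      · rw [hQo i' (fun hh => h3 hh.symm) (Ne.symm hii)] at hei'
        rcases List.mem_append.mp hei with hb1 | hb2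
        · exact hd b i' hii e (List.mem_of_mem_take hb1) hei'
        · exact hd a i' (fun hh => h3 hh) e (List.mem_of_mem_drop hb2) hei'
    · rw [hQo i (fun hh => h1 hh.symm) (fun hh => h2 hh.symm)] at hei
      rcases hmemQ i' e hei' with h | h | ⟨h3, h4, h5⟩
      · exact hd a i h1 e h hei
      · exact hd b i h2 e h hei
      · exact hd i i' hii e hei h5
  have huniq := hP.2 j Q hQpaths hQdisj a
  rw [hQa] at huniq
  have hsplit : (P a j).take n ++ (P a j).drop n = P a j := List.take_append_drop n _
  have h2 : (P a j).take n ++ (P b j).drop m = (P a j).take n ++ (P a j).drop n := by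
    rw [hsplit]; exact huniq
  have hdm : (P b j).drop m = (P a j).drop n := List.append_cancel_left h2
  have hlen0 : 0 < ((P a j).drop n).length := by simp; omega
  have hlen0' : 0 < ((P b j).drop m).length := by rw [hdm]; exact hlen0
  have hge : ((P b j).drop m)[0]'hlen0' = ((P a j).drop n)[0]'hlen0 :=
    List.getElem_of_eq hdm hlen0'
  have he : ((P a j).drop n)[0]'hlen0 ∈ P a j :=
    List.mem_of_mem_drop (List.getElem_mem _)
  have he2 : ((P a j).drop n)[0]'hlen0 ∈ P b j := by
    rw [← hge]
    exact List.mem_of_mem_drop (List.getElem_mem _)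
  exact hd a b hab _ he he2

end Stability

section Reroute

variable {k : ℕ} {N : KPairNetwork k} {P : Fin k → Fin k → List N.A}

lemma reroute_single (hP : N.IsStableSystem P) {j a : Fin k} {n m : ℕ}
    (hnm : n ≤ m) (hm : m ≤ (P a j).length) {c : List N.A} (hcne : c ≠ [])
    (hc : N.Walk ((N.vseq (N.src a) (P a j))[n]'(by simp; omega))
      ((N.vseq (N.src a) (P a j))[m]'(by simp; omega)) c)
    (hfree : ∀ e ∈ c, ∀ i, e ∉ P i j) : False := by
  classical
  have wa := walkP hP a j
  have hd := hP.1.2 j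
  set Q : Fin k → List N.A := fun x =>
    if x = a then (P a j).take n ++ (c ++ (P a j).drop m) else P x j with hQ
  have hQa : Q a = (P a j).take n ++ (c ++ (P a j).drop m) := by simp [hQ]
  have hQo : ∀ x, x ≠ a → Q x = P x j := by intro x h1; simp [hQ, h1]
  have hwQa : N.Walk (N.src a) (N.snk j) (Q a) := by
    rw [hQa]
    exact Walk.append (wa.take (hnm.trans hm)) (Walk.append hc (wa.drop hm))
  have hQpaths : ∀ i, N.IsPathFrom (N.src i) (N.snk j) (Q i) := by
    intro i
    by_cases h1 : a = i
    · subst h1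
      refine isPathFrom_iff_walk.mpr ⟨hwQa, ?_⟩
      rw [hQa]
      intro hemp
      exact hcne (by simpa using ((List.append_eq_nil_iff.mp ((List.append_eq_nil_iff.mp hemp).2)).1))
    · rw [hQo i (fun hh => h1 hh.symm)]; exact hP.1.1 i j
  have hmemQa : ∀ e ∈ Q a, e ∈ P a j ∨ e ∈ c := by
    intro e he
    rw [hQa] at he
    rcases List.mem_append.mp he with h | h
    · exact Or.inl (List.mem_of_mem_take h)
    rcases List.mem_append.mp h with h | h
    · exact Or.inr h
    · exact Or.inl (List.mem_of_mem_drop h)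
  have hQdisj : ∀ i i', i ≠ i' → ∀ e : N.A, e ∈ Q i → e ∉ Q i' := by
    intro i i' hii e hei hei'
    by_cases h1 : a = i
    · subst h1
      rw [hQo i' (Ne.symm hii)] at hei'
      rcases hmemQa e hei with h | h
      · exact hd a i' hii e h hei'
      · exact hfree e h i' hei'
    by_cases h2 : a = i'
    · subst h2
      rw [hQo i (fun hh => h1 hh.symm)] at hei
      rcases hmemQa e hei' with h | h
      · exact hd i a (fun hh => h1 hh.symm) e hei h
      · exact hfree e h i hei
    · rw [hQo i (fun hh => h1 hh.symm)] at hei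
      rw [hQo i' (fun hh => h2 hh.symm)] at hei'
      exact hd i i' hii e hei hei'
  have huniq := hP.2 j Q hQpaths hQdisj a
  rw [hQa] at huniq
  have hch : c.head hcne ∈ P a j := by
    rw [← huniq]
    exact List.mem_append.mpr (Or.inr (List.mem_append.mpr (Or.inl (List.head_mem hcne))))
  exact hfree _ (List.head_mem hcne) a hch

lemma reroute_double (hP : N.IsStableSystem P) {j : Fin k} {a b : Fin k} (hab : a ≠ b)
    {n m n' m' : ℕ}
    (h1 : n ≤ m') (hm' : m' ≤ (P a j).length) (h2 : n' ≤ m) (hm : m ≤ (P b j).length)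
    {c c' : List N.A} (hcne : c ≠ []) (hc'ne : c' ≠ [])
    (hc : N.Walk ((N.vseq (N.src a) (P a j))[n]'(by simp; omega))
      ((N.vseq (N.src b) (P b j))[m]'(by simp; omega)) c)
    (hc' : N.Walk ((N.vseq (N.src b) (P b j))[n']'(by simp; omega))
      ((N.vseq (N.src a) (P a j))[m']'(by simp; omega)) c')
    (hfree : ∀ e ∈ c, ∀ i, e ∉ P i j) (hfree' : ∀ e ∈ c', ∀ i, e ∉ P i j)
    (hcc' : ∀ e ∈ c, e ∉ c') : False := by
  classical
  have wa := walkP hP a j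
  have wb := walkP hP b j
  have hd := hP.1.2 j
  set Q : Fin k → List N.A := fun x =>
    if x = a then (P a j).take n ++ (c ++ (P b j).drop m)
    else if x = b then (P b j).take n' ++ (c' ++ (P a j).drop m')
    else P x j with hQ
  have hQa : Q a = (P a j).take n ++ (c ++ (P b j).drop m) := by simp [hQ]
  have hQb : Q b = (P b j).take n' ++ (c' ++ (P a j).drop m') := by simp [hQ, hab.symm]
  have hQo : ∀ x, x ≠ a → x ≠ b → Q x = P x j := by
    intro x hx1 hx2; simp [hQ, hx1, hx2]
  have hwQa : N.Walk (N.src a) (N.snk j) (Q a) := by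
    rw [hQa]
    exact Walk.append (wa.take (h1.trans hm')) (Walk.append hc (wb.drop hm))
  have hwQb : N.Walk (N.src b) (N.snk j) (Q b) := by
    rw [hQb]
    exact Walk.append (wb.take (h2.trans hm)) (Walk.append hc' (wa.drop hm'))
  have hQpaths : ∀ i, N.IsPathFrom (N.src i) (N.snk j) (Q i) := by
    intro i
    by_cases hh1 : a = i
    · subst hh1
      refine isPathFrom_iff_walk.mpr ⟨hwQa, ?_⟩
      rw [hQa]
      intro hemp
      exact hcne (by simpa using ((List.append_eq_nil_iff.mp ((List.append_eq_nil_iff.mp hemp).2)).1))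
    by_cases hh2 : b = i
    · subst hh2
      refine isPathFrom_iff_walk.mpr ⟨hwQb, ?_⟩
      rw [hQb]
      intro hemp
      exact hc'ne (by simpa using ((List.append_eq_nil_iff.mp ((List.append_eq_nil_iff.mp hemp).2)).1))
    · rw [hQo i (fun hh => hh1 hh.symm) (fun hh => hh2 hh.symm)]; exact hP.1.1 i j
  -- membership decompositions
  have hmemQa : ∀ e ∈ Q a, e ∈ (P a j).take n ∨ e ∈ c ∨ e ∈ (P b j).drop m := by
    intro e he
    rw [hQa] at he
    rcases List.mem_append.mp he with h | h
    · exact Or.inl h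
    rcases List.mem_append.mp h with h | h
    · exact Or.inr (Or.inl h)
    · exact Or.inr (Or.inr h)
  have hmemQb : ∀ e ∈ Q b, e ∈ (P b j).take n' ∨ e ∈ c' ∨ e ∈ (P a j).drop m' := by
    intro e he
    rw [hQb] at he
    rcases List.mem_append.mp he with h | h
    · exact Or.inl h
    rcases List.mem_append.mp h with h | h
    · exact Or.inr (Or.inl h)
    · exact Or.inr (Or.inr h)
  have hQdisjab : ∀ e : N.A, e ∈ Q a → e ∉ Q b := by
    intro e hea heb
    rcases hmemQa e hea with h | h | h <;> rcases hmemQb e heb with g | g | g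
    · exact hd a b hab e (List.mem_of_mem_take h) (List.mem_of_mem_take g)
    · exact hfree' e g a (List.mem_of_mem_take h)
    · exact List.disjoint_take_drop wa.nodup h1 h g
    · exact hfree e h b (List.mem_of_mem_take g)
    · exact hcc' e h g
    · exact hfree e h a (List.mem_of_mem_drop g)
    · exact List.disjoint_take_drop wb.nodup h2 g h
    · exact hfree' e g b (List.mem_of_mem_drop h)
    · exact hd b a hab.symm e (List.mem_of_mem_drop h) (List.mem_of_mem_drop g)
  have hQsub : ∀ e ∈ Q a, e ∈ P a j ∨ e ∈ P b j ∨ e ∈ c := by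
    intro e he
    rcases hmemQa e he with h | h | h
    · exact Or.inl (List.mem_of_mem_take h)
    · exact Or.inr (Or.inr h)
    · exact Or.inr (Or.inl (List.mem_of_mem_drop h))
  have hQsub' : ∀ e ∈ Q b, e ∈ P a j ∨ e ∈ P b j ∨ e ∈ c' := by
    intro e he
    rcases hmemQb e he with h | h | h
    · exact Or.inr (Or.inl (List.mem_of_mem_take h))
    · exact Or.inr (Or.inr h)
    · exact Or.inl (List.mem_of_mem_drop h)
  have hQdisj : ∀ i i', i ≠ i' → ∀ e : N.A, e ∈ Q i → e ∉ Q i' := by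
    intro i i' hii e hei hei'
    by_cases ha1 : a = i
    · subst ha1
      by_cases hb1 : b = i'
      · subst hb1; exact hQdisjab e hei hei'
      · rw [hQo i' (Ne.symm hii) (fun hh => hb1 hh.symm)] at hei'
        rcases hQsub e hei with h | h | h
        · exact hd a i' hii e h hei'
        · exact hd b i' (fun hh => hb1 hh) e h hei'
        · exact hfree e h i' hei'
    by_cases hb1 : b = i
    · subst hb1
      by_cases ha2 : a = i'
      · subst ha2; exact hQdisjab e hei' hei
      · rw [hQo i' (fun hh => ha2 hh.symm) (Ne.symm hii)] at hei'
        rcases hQsub' e hei with h | h | h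
        · exact hd a i' (fun hh => ha2 hh) e h hei'
        · exact hd b i' hii e h hei'
        · exact hfree' e h i' hei'
    · rw [hQo i (fun hh => ha1 hh.symm) (fun hh => hb1 hh.symm)] at hei
      by_cases ha2 : a = i'
      · subst ha2
        rcases hQsub e hei' with h | h | h
        · exact hd i a (fun hh => ha1 hh.symm) e hei h
        · exact hd i b (fun hh => hb1 hh.symm) e hei h
        · exact hfree e h i hei
      by_cases hb2 : b = i'
      · subst hb2
        rcases hQsub' e hei' with h | h | h
        · exact hd i a (fun hh => ha1 hh.symm) e hei h
        · exact hd i b (fun hh => hb1 hh.symm) e hei h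
        · exact hfree' e h i hei
      · rw [hQo i' (fun hh => ha2 hh.symm) (fun hh => hb2 hh.symm)] at hei'
        exact hd i i' hii e hei hei'
  have huniq := hP.2 j Q hQpaths hQdisj a
  rw [hQa] at huniq
  have hch : c.head hcne ∈ P a j := by
    rw [← huniq]
    exact List.mem_append.mpr (Or.inr (List.mem_append.mpr (Or.inl (List.head_mem hcne))))
  exact hfree _ (List.head_mem hcne) a hch

end Reroute

section LCSBasic

open Classical in
/-- Length of the longest common prefix. -/
noncomputable def lcpLen {α : Type _} (p q : List α) : ℕ :=
  Nat.findGreatest (fun m => p.take m = q.take m) (min p.length q.length)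

open Classical in
lemma lcpLen_le {α : Type _} (p q : List α) : lcpLen p q ≤ min p.length q.length :=
  Nat.findGreatest_le _

open Classical in
lemma take_lcpLen_eq {α : Type _} (p q : List α) :
    p.take (lcpLen p q) = q.take (lcpLen p q) := by
  have := Nat.findGreatest_spec (P := fun m => p.take m = q.take m)
    (n := min p.length q.length) (Nat.zero_le _) (by simp)
  exact this

open Classical in
lemma lcpLen_max {α : Type _} {p q : List α} {m : ℕ} (h : lcpLen p q < m)
    (hm : m ≤ min p.length q.length) : p.take m ≠ q.take m :=
  Nat.findGreatest_is_greatest h hm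

open Classical in
lemma le_lcpLen {α : Type _} {p q : List α} {m : ℕ} (hm : m ≤ min p.length q.length)
    (h : p.take m = q.take m) : m ≤ lcpLen p q :=
  Nat.le_findGreatest hm h

variable {k : ℕ} {N : KPairNetwork k}

lemma pathVerts_mono {l m : List N.A} (h : ∀ a ∈ l, a ∈ m) :
    N.pathVerts l ⊆ N.pathVerts m := by
  rintro v ⟨a, ha, hv⟩; exact ⟨a, h a ha, hv⟩

lemma mem_segVerts_fst (s : N.V × List N.A) : s.1 ∈ N.segVerts s :=
  Set.mem_insert _ _

lemma segVerts_subset_of_segLE {s s' : N.V × List N.A} (h : N.SegLE s s') :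
    N.segVerts s ⊆ N.segVerts s' := by
  rintro v hv
  rcases Set.mem_insert_iff.mp hv with rfl | hv
  · exact h.2
  · exact Set.subset_insert _ _ (pathVerts_mono (fun a ha => h.1.subset ha) hv)

lemma exists_lcs_through {p q : List N.A} {y : N.V}
    (hyp : y ∈ N.pathVerts p) (hyq : y ∈ N.pathVerts q) :
    ∃ s, N.IsLCS {p, q} s ∧ N.SegOn s p ∧ N.SegOn s q ∧ y ∈ N.segVerts s := by
  classical
  set F : Set (N.V × List N.A) :=
    {s | N.IsSeg s ∧ N.SegOn s p ∧ N.SegOn s q ∧ y ∈ N.segVerts s} with hF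
  have hFne : F.Nonempty := by
    refine ⟨(y, []), ⟨List.isChain_nil, by intro a ha; simp at ha⟩, ⟨⟨[], p, by simp⟩, hyp⟩,
      ⟨⟨[], q, by simp⟩, hyq⟩, Set.mem_insert _ _⟩
  have hFfin : F.Finite := by
    apply Set.Finite.subset
      (Set.Finite.prod (Set.toFinite (N.pathVerts p)) (List.finite_toSet p.sublists))
    rintro ⟨v, l⟩ ⟨_, hsp, _, _⟩
    exact ⟨hsp.2, List.mem_sublists.mpr hsp.1.sublist⟩
  obtain ⟨s, hsF, hmax⟩ := Set.Finite.exists_maximalFor (fun s => s.2.length) F hFfin hFne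
  refine ⟨s, ⟨hsF.1, ?_, ?_⟩, hsF.2.1, hsF.2.2.1, hsF.2.2.2⟩
  · rintro r hr
    rcases hr with rfl | hr
    · exact hsF.2.1
    · rw [Set.mem_singleton_iff] at hr; subst hr; exact hsF.2.2.1
  · intro s' hseg' hle hne
    by_contra hno
    push_neg at hno
    have hs'p : N.SegOn s' p := hno p (by simp)
    have hs'q : N.SegOn s' q := hno q (by simp)
    have hs'F : s' ∈ F :=
      ⟨hseg', hs'p, hs'q, segVerts_subset_of_segLE hle hsF.2.2.2⟩
    have hlen := le_antisymm hle.1.length_le (hmax hs'F hle.1.length_le)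
    have heq2 : s.2 = s'.2 := hle.1.eq_of_length hlen
    apply hne
    have heq1 : s'.1 = s.1 := by
      rcases List.eq_nil_or_concat s.2 with h2 | ⟨l', a, h2⟩
      · have h2' : s'.2 = [] := by rw [← heq2, h2]
        have hmem := hle.2
        rcases Set.mem_insert_iff.mp hmem with h | h
        · exact h.symm
        · rw [h2'] at h
          obtain ⟨a2, ha2, _⟩ := h
          exact absurd ha2 (List.not_mem_nil)
      · have hne2 : s.2 ≠ [] := by rw [h2]; simp
        have hne2' : s'.2 ≠ [] := by rw [← heq2]; exact hne2
        have e1 := hseg'.2 (s'.2.head hne2') (by rw [List.head?_eq_head hne2']; rfl)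
        have e2 := hsF.1.2 (s.2.head hne2) (by rw [List.head?_eq_head hne2]; rfl)
        have hhead : s'.2.head hne2' = s.2.head hne2 := by
          congr 1
          exact heq2.symm
        rw [← e1, ← e2, hhead]
    exact Prod.ext heq1 heq2.symm

lemma infix_isPrefix_of_head_mem {α : Type _} {l m : List α} (hlm : l <:+: m)
    (hnd : m.Nodup) (h0 : 0 < m.length) (hm : m[0] ∈ l) : l <+: m := by
  obtain ⟨s, t, rfl⟩ := hlm
  cases s with
  | nil => exact ⟨t, by simp⟩
  | cons a s' =>
    exfalso
    have ha : (((a :: s') ++ l ++ t))[0] = a := rfl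
    rw [ha] at hm
    have h3 : (a :: (s' ++ l ++ t)).Nodup := by simpa using hnd
    have h4 := (List.nodup_cons.mp h3).1
    exact h4 (by simp [hm])

end LCSBasic

section PrefixLCS

variable {k : ℕ} {N : KPairNetwork k}

lemma Walk.end_mem_pathVerts {u v : N.V} {p : List N.A} (h : N.Walk u v p) (hp : p ≠ []) :
    v ∈ N.pathVerts p := by
  refine ⟨p.getLast hp, List.getLast_mem hp, Or.inr ?_⟩
  exact (h.2.2.1 _ (by rw [List.getLast?_eq_getLast hp]; rfl)).symm

lemma Walk.start_mem_pathVerts {u v : N.V} {p : List N.A} (h : N.Walk u v p) (hp : p ≠ []) :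
    u ∈ N.pathVerts p := by
  have h0 : 0 < p.length := List.length_pos_iff.mpr hp
  refine ⟨p[0], List.getElem_mem h0, Or.inl ?_⟩
  rw [h.tail_getElem h0]
  rfl

lemma lcp_lt_left {u v : N.V} {p q : List N.A} (hp : N.Walk u v p) (hpne : p ≠ [])
    (hvq : v ∉ N.pathVerts q) : lcpLen p q < p.length := by
  rcases Nat.lt_or_ge (lcpLen p q) p.length with h | h
  · exact h
  exfalso
  have hle := lcpLen_le p q
  have heq : lcpLen p q = p.length := le_antisymm (le_trans hle (min_le_left _ _)) h
  have htake := take_lcpLen_eq p q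
  rw [heq, List.take_length] at htake
  have hpre : p <+: q := by rw [List.prefix_iff_eq_take]; exact htake
  exact hvq (pathVerts_mono (fun a ha => hpre.subset ha) (hp.end_mem_pathVerts hpne))

lemma lcp_lt_right {u w : N.V} {p q : List N.A} (hq : N.Walk u w q) (hqne : q ≠ [])
    (hwp : w ∉ N.pathVerts p) : lcpLen p q < q.length := by
  rcases Nat.lt_or_ge (lcpLen p q) q.length with h | h
  · exact h
  exfalso
  have hle := lcpLen_le p q
  have heq : lcpLen p q = q.length := le_antisymm (le_trans hle (min_le_right _ _)) h
  have htake := take_lcpLen_eq p q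
  rw [heq, List.take_length] at htake
  have hpre : q <+: p := by rw [List.prefix_iff_eq_take]; exact htake.symm
  exact hwp (pathVerts_mono (fun a ha => hpre.subset ha) (hq.end_mem_pathVerts hqne))

lemma Walk.eq_getElem_zero_of_tail {u v : N.V} {p : List N.A} (h : N.Walk u v p)
    {a : N.A} (ha : a ∈ p) (ht : N.tail a = u) :
    a = p[0]'(List.length_pos_iff.mpr (List.ne_nil_of_mem ha)) := by
  obtain ⟨q', hq', rfl⟩ := List.mem_iff_getElem.mp ha
  have h1 := h.tail_getElem hq'
  rw [ht] at h1
  have h2 : (N.vseq u p)[q']'(by simp; omega) = (N.vseq u p)[0]'(by simp) := by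
    rw [← h1]; rfl
  have h3 : q' = 0 := (h.vseq_nodup.getElem_inj_iff).mp h2
  congr 1

lemma vseq_lcp_agree {u v w : N.V} {p q : List N.A} (hp : N.Walk u v p) (hq : N.Walk u w q)
    {t : ℕ} (ht : t ≤ lcpLen p q) (htp : t ≤ p.length) (htq : t ≤ q.length) :
    (N.vseq u p)[t]'(by simp; omega) = (N.vseq u q)[t]'(by simp; omega) := by
  cases t with
  | zero => rfl
  | succ t' =>
    have h1 : t' < p.length := by omega
    have h2 : t' < q.length := by omega
    rw [← hp.head_getElem h1, ← hq.head_getElem h2]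
    congr 1
    have h3 : t' < (p.take (lcpLen p q)).length := by
      have := lcpLen_le p q
      simp
      omega
    have h4 : t' < (q.take (lcpLen p q)).length := by
      have := lcpLen_le p q
      simp
      omega
    calc p[t'] = (p.take (lcpLen p q))[t']'h3 := (List.getElem_take).symm
    _ = (q.take (lcpLen p q))[t']'h4 := by
        have := take_lcpLen_eq p q
        exact List.getElem_of_eq this h3
    _ = q[t'] := List.getElem_take

lemma prefix_isSeg {u v : N.V} {p : List N.A} (hp : N.Walk u v p) (n : ℕ) :
    N.IsSeg (u, p.take n) := by
  refine ⟨hp.1.take n, ?_⟩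
  intro a ha
  rw [List.head?_take] at ha
  split at ha
  · simp at ha
  · exact hp.2.1 a ha

lemma prefix_isLCS {u v w : N.V} {p q : List N.A}
    (hp : N.Walk u v p) (hq : N.Walk u w q) (hpne : p ≠ []) (hqne : q ≠ [])
    (hvq : v ∉ N.pathVerts q) (hwp : w ∉ N.pathVerts p)
    (hu : ∀ a : N.A, N.head a ≠ u) :
    N.IsLCS {p, q} (u, p.take (lcpLen p q)) := by
  have hnp := lcp_lt_left hp hpne hvq
  have hnq := lcp_lt_right (p := p) hq hqne hwp
  set n := lcpLen p q with hn
  have hp0 : 0 < p.length := List.length_pos_iff.mpr hpne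
  have hq0 : 0 < q.length := List.length_pos_iff.mpr hqne
  have htake : p.take n = q.take n := take_lcpLen_eq p q
  refine ⟨prefix_isSeg hp n, ?_, ?_⟩
  · rintro r hr
    rcases hr with rfl | hr
    · exact ⟨(List.take_prefix n r).isInfix, hp.start_mem_pathVerts hpne⟩
    · rw [Set.mem_singleton_iff] at hr
      subst hr
      exact ⟨htake ▸ (List.take_prefix n r).isInfix, hq.start_mem_pathVerts hqne⟩
  · intro s' hseg' hle hne
    by_contra hno
    push_neg at hno
    have hs'p : N.SegOn s' p := hno p (by simp)
    have hs'q : N.SegOn s' q := hno q (by simp)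
    rcases eq_or_ne s'.2 [] with hl | hl
    · -- empty segment case
      have h1 : p.take n <:+: s'.2 := hle.1
      rw [hl, List.infix_nil, List.take_eq_nil_iff] at h1
      have hn0 : n = 0 := by
        rcases h1 with h1 | h1
        · exact h1
        · exact absurd h1 hpne
      have h2 := hle.2
      rcases Set.mem_insert_iff.mp h2 with h2 | h2
      · apply hne
        refine Prod.ext h2.symm ?_
        rw [hl, hn0]
        simp
      · rw [hl] at h2
        obtain ⟨a2, ha2, _⟩ := h2
        exact absurd ha2 (List.not_mem_nil)
    · -- nonempty segment case
      have hinfp : s'.2 <:+: p := hs'p.1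
      have hinfq : s'.2 <:+: q := hs'q.1
      -- first arcs of p and q belong to s'.2
      have hmem0 : p[0] ∈ s'.2 ∧ q[0] ∈ s'.2 := by
        rcases Nat.eq_zero_or_pos n with hn0 | hnpos
        · -- n = 0 : use the start vertex
          have h2 := hle.2
          have hget : ∃ a ∈ s'.2, N.tail a = u := by
            rcases Set.mem_insert_iff.mp h2 with h2 | h2
            · refine ⟨s'.2.head hl, List.head_mem hl, ?_⟩
              rw [hseg'.2 _ (by rw [List.head?_eq_head hl]; rfl), ← h2]
            · obtain ⟨a2, ha2, hta | hha⟩ := h2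
              · rw [hn0] at hta
                exact ⟨a2, ha2, hta.symm⟩
              · exfalso
                rw [hn0] at hha
                exact hu a2 hha.symm
          obtain ⟨a2, ha2, hta⟩ := hget
          constructor
          · have := hp.eq_getElem_zero_of_tail (hinfp.subset ha2) hta
            rw [← this]; exact ha2
          · have := hq.eq_getElem_zero_of_tail (hinfq.subset ha2) hta
            rw [← this]; exact ha2
        · -- n > 0 : p[0] ∈ p.take n ⊆ s'.2
          have hp0' : p[0] ∈ p.take n := by
            have : (p.take n)[0]'(by simp; omega) = p[0] := List.getElem_take
            rw [← this]
            exact List.getElem_mem _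
          have hq0' : q[0] ∈ p.take n := by
            rw [htake]
            have : (q.take n)[0]'(by simp; omega) = q[0] := List.getElem_take
            rw [← this]
            exact List.getElem_mem _
          exact ⟨hle.1.subset hp0', hle.1.subset hq0'⟩
      have hprep : s'.2 <+: p := infix_isPrefix_of_head_mem hinfp hp.nodup hp0 hmem0.1
      have hpreq : s'.2 <+: q := infix_isPrefix_of_head_mem hinfq hq.nodup hq0 hmem0.2
      have hlen_le : s'.2.length ≤ n := by
        apply le_lcpLen
        · exact le_min hprep.length_le hpreq.length_le
        · rw [← List.prefix_iff_eq_take.mp hprep, ← List.prefix_iff_eq_take.mp hpreq]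
      have hlen_ge : n ≤ s'.2.length := by
        have := hle.1.length_le
        rwa [List.length_take, min_eq_left (le_of_lt hnp)] at this
      have hlen : s'.2.length = n := le_antisymm hlen_le hlen_ge
      have hseq : s'.2 = p.take n := by
        rw [List.prefix_iff_eq_take.mp hprep, hlen]
      have hnpos : 0 < n := by
        rcases Nat.eq_zero_or_pos n with h0 | h0
        · exfalso; apply hl; rw [hseq, h0]; simp
        · exact h0
      apply hne
      refine Prod.ext ?_ hseq
      have hhead := hseg'.2 _ (by rw [List.head?_eq_head hl]; rfl)
      have hh0 : s'.2.head hl = p[0] := by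
        rw [List.head_eq_getElem]
        have h6 := List.getElem_of_eq hseq (List.length_pos_iff.mpr hl)
        rw [h6, List.getElem_take]
      rw [← hhead, hh0, hp.tail_getElem hp0]
      rfl

end PrefixLCS

section Connector

variable {kk : ℕ} {N : KPairNetwork kk}

/-- The set whose cardinality is `lcsCount`. -/
def cntSet (N : KPairNetwork kk) (P : Fin kk → Fin kk → List N.A) (c d : Fin kk)
    (p : List N.A) : Set (N.V × List N.A) :=
  {s | (∃ a b, N.IsLCS {P a c, P b d} s) ∧ N.SegOn s p}

variable {P : Fin kk → Fin kk → List N.A}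

lemma prefix_lcs_P (hP : N.IsStableSystem P) {c d : Fin kk} (hcd : c ≠ d) (i : Fin kk) :
    N.IsLCS {P i c, P i d} (N.src i, (P i c).take (lcpLen (P i c) (P i d))) :=
  prefix_isLCS (walkP hP i c) (walkP hP i d) (neNilP hP i c) (neNilP hP i d)
    (Walk.snk_not_mem hcd (walkP hP i d)) (Walk.snk_not_mem hcd.symm (walkP hP i c))
    (fun a2 => N.src_no_in i a2)

end Connector

section ConnectorMain

variable {N : KPairNetwork 3} {P : Fin 3 → Fin 3 → List N.A}

lemma connector (hP : N.IsStableSystem P) {c d : Fin 3} (hcd : c ≠ d) {i j : Fin 3}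
    (hij : j ≠ i)
    (h1 : Nat.card (cntSet N P c d (P i c)) = 1)
    (hne : Nat.card (cntSet N P c d (P j d)) ≠ 1) :
    ∃ k' : Fin 3, k' ≠ j ∧ k' ≠ i ∧
      ∃ n, n = lcpLen (P j c) (P j d) ∧
      ∃ hn : n < (N.vseq (N.src j) (P j c)).length,
      ∃ m, ∃ hm : m < (N.vseq (N.src k') (P k' c)).length,
      ∃ conn : List N.A, conn ≠ [] ∧
        N.Walk ((N.vseq (N.src j) (P j c))[n]'hn) ((N.vseq (N.src k') (P k' c))[m]'hm) conn ∧
        (∀ e ∈ conn, ∀ i2, e ∉ P i2 c) ∧ (∀ e ∈ conn, e ∈ P j d) ∧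
        ((N.vseq (N.src k') (P k' c))[m]'hm) ∈ N.pathVerts (P j d) := by
  classical
  have wr := walkP hP j c
  have wg := walkP hP j d
  have hrne := neNilP hP j c
  have hgne := neNilP hP j d
  set r := P j c with hr
  set g := P j d with hg
  have hsnkc_g : N.snk c ∉ N.pathVerts g := Walk.snk_not_mem hcd wg
  have hsnkd_r : N.snk d ∉ N.pathVerts r := Walk.snk_not_mem hcd.symm wr
  set n := lcpLen r g with hn
  have hnr : n < r.length := lcp_lt_left wr hrne hsnkc_g
  have hng : n < g.length := lcp_lt_right wg hgne hsnkd_r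
  have htaken : r.take n = g.take n := take_lcpLen_eq r g
  have hstar : N.IsLCS {r, g} (N.src j, r.take n) := prefix_lcs_P hP hcd j
  set sstar : N.V × List N.A := (N.src j, r.take n) with hsstar
  have hstar_on_r : N.SegOn sstar r := hstar.2.1 r (Set.mem_insert _ _)
  have hstar_on_g : N.SegOn sstar g := hstar.2.1 g (by simp)
  have hstar_mem : sstar ∈ cntSet N P c d (P j d) := ⟨⟨j, j, hstar⟩, hstar_on_g⟩
  obtain ⟨s₂, hs₂mem, hs₂ne⟩ : ∃ s₂ ∈ cntSet N P c d (P j d), s₂ ≠ sstar := by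
    by_contra hall
    push_neg at hall
    apply hne
    apply Nat.card_eq_one_iff_unique.mpr
    constructor
    · constructor
      intro x y
      apply Subtype.ext
      rw [hall x.1 x.2, hall y.1 y.2]
    · exact ⟨⟨sstar, hstar_mem⟩⟩
  obtain ⟨⟨a, b, hlcs⟩, hon⟩ := hs₂mem
  have hs2g : N.SegOn s₂ (P b d) := hlcs.2.1 (P b d) (by simp)
  have hs2r : N.SegOn s₂ (P a c) := hlcs.2.1 (P a c) (Set.mem_insert _ _)
  have hbj : b = j := by
    by_contra hbj
    rcases eq_or_ne s₂.2 [] with h2 | h2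
    · have hv1 : s₂.1 ∈ N.pathVerts g := hon.2
      have hv2 : s₂.1 ∈ N.pathVerts (P b d) := hs2g.2
      have hsnk := stable_pathVerts_disjoint hP (a := b) (b := j) hbj hv2 hv1
      have hv3 : s₂.1 ∈ N.pathVerts (P a c) := hs2r.2
      rw [hsnk] at hv3
      exact Walk.snk_not_mem hcd.symm (walkP hP a c) hv3
    · have he : s₂.2.head h2 ∈ g := hon.1.subset (List.head_mem h2)
      have he' : s₂.2.head h2 ∈ P b d := hs2g.1.subset (List.head_mem h2)
      exact hP.1.2 d j b (fun hh => hbj hh.symm) _ he he'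
  rw [hbj] at hs2g hlcs
  -- extract a "red" vertex of g strictly after the common prefix
  have hextract : ∃ m0, n < m0 ∧ ∃ hm0 : m0 < (N.vseq (N.src j) g).length,
      ∃ i2, ((N.vseq (N.src j) g)[m0]'hm0) ∈ N.pathVerts (P i2 c) := by
    rcases eq_or_ne a j with haj | haj
    · rw [haj] at hs2r hlcs
      rw [← hr] at hs2r
      have hnoLE : ¬ N.SegLE s₂ sstar := by
        intro hle
        obtain ⟨p', hp', hnot⟩ := hlcs.2.2 sstar hstar.1 hle (fun hh => hs₂ne hh.symm)
        rcases hp' with rfl | hp'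
        · exact hnot hstar_on_r
        · rw [Set.mem_singleton_iff] at hp'
          subst hp'
          exact hnot hstar_on_g
      rcases eq_or_ne s₂.2 [] with h2 | h2
      · have hvg : s₂.1 ∈ N.pathVerts g := hon.2
        have hvr : s₂.1 ∈ N.pathVerts r := hs2r.2
        obtain ⟨m0, hm0', hvm0⟩ := List.mem_iff_getElem.mp
          ((wg.mem_pathVerts_iff hgne).mp hvg)
        refine ⟨m0, ?_, hm0', ⟨j, by rw [hvm0]; exact hvr⟩⟩
        by_contra hle'
        push_neg at hle'
        apply hnoLE
        refine ⟨by rw [h2]; exact List.nil_infix, ?_⟩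
        have hagree := vseq_lcp_agree wr wg (t := m0) (hn ▸ hle') (by omega)
          (by simp at hm0'; omega)
        rcases Nat.eq_zero_or_pos m0 with hm00 | hm00
        · apply Set.mem_insert_iff.mpr
          left
          rw [← hvm0]
          subst hm00
          rfl
        · apply Set.mem_insert_iff.mpr
          right
          have hm1 : m0 - 1 < n := by omega
          have hmemt : r[m0-1]'(by omega) ∈ r.take n := by
            have h6 : (r.take n)[m0-1]'(by simp; omega) = r[m0-1]'(by omega) :=
              List.getElem_take
            rw [← h6]
            exact List.getElem_mem _
          refine ⟨r[m0-1]'(by omega), hmemt, Or.inr ?_⟩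
          have h7 : N.head (r[m0-1]'(by omega)) = (N.vseq (N.src j) r)[m0]'(by simp; omega) := by
            have h8 := wr.head_getElem (q := m0 - 1) (by omega)
            rw [h8]
            congr 1
            omega
          rw [← hvm0, ← hagree, ← h7]
      · by_cases hall : ∀ e ∈ s₂.2, e ∈ r.take n
        · exfalso
          apply hnoLE
          obtain ⟨s, t, hst⟩ := hs2r.1
          have hLpos : 0 < s₂.2.length := List.length_pos_iff.mpr h2
          have hlast_mem : s₂.2.getLast h2 ∈ r.take n := hall _ (List.getLast_mem h2)
          obtain ⟨qq, hqq, hqe⟩ := List.mem_iff_getElem.mp hlast_mem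
          have hqq' : qq < n := by simp at hqq; omega
          have hq2 : r[qq]'(by omega) = s₂.2.getLast h2 := by
            rw [← hqe]
            exact (List.getElem_take).symm
          have hpos_lt : s.length + s₂.2.length - 1 < r.length := by
            rw [← hst]
            simp
            omega
          have hpos : r[s.length + s₂.2.length - 1]'hpos_lt = s₂.2.getLast h2 := by
            have hlt1 : s.length + s₂.2.length - 1 < (s ++ s₂.2).length := by simp; omega
            have e0 : r[s.length + s₂.2.length - 1]'hpos_lt =
                ((s ++ s₂.2) ++ t)[s.length + s₂.2.length - 1]'(by rw [hst]; exact hpos_lt) := by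
              congr 1
              rw [hst]
            rw [e0, List.getElem_append]
            rw [dif_pos hlt1, List.getElem_append]
            rw [dif_neg (by omega)]
            rw [List.getLast_eq_getElem]
            congr 1
            omega
          have hflen : s.length + s₂.2.length ≤ n := by
            have h11 : r[qq]'(by omega) = r[s.length + s₂.2.length - 1]'hpos_lt := by
              rw [hq2, hpos]
            have := wr.nodup.getElem_inj_iff.mp h11
            omega
          have hinf : s₂.2 <:+: r.take n := by
            refine ⟨s, t.take (n - s.length - s₂.2.length), ?_⟩
            have e1 : r.take n = (s ++ s₂.2 ++ t).take n := by rw [hst]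
            have e2 : (s ++ s₂.2).take n = s ++ s₂.2 :=
              List.take_of_length_le (by simp; omega)
            rw [e1, List.take_append, e2]
            simp only [List.length_append]
            congr 2
            omega
          refine ⟨hinf, ?_⟩
          have hh := hlcs.1.2 _ (by rw [List.head?_eq_head h2]; rfl)
          refine Set.mem_insert_iff.mpr (Or.inr ?_)
          exact ⟨s₂.2.head h2, hall _ (List.head_mem h2), Or.inl hh.symm⟩
        · push_neg at hall
          obtain ⟨e, heL, hent⟩ := hall
          have heg : e ∈ g := hon.1.subset heL
          have her : e ∈ r := hs2r.1.subset heL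
          obtain ⟨qg, hqg, rfl⟩ := List.mem_iff_getElem.mp heg
          have hqgn : n ≤ qg := by
            by_contra hlt
            push_neg at hlt
            apply hent
            have hmem : g[qg] ∈ g.take n := by
              have h6 : (g.take n)[qg]'(by simp; omega) = g[qg] := List.getElem_take
              rw [← h6]
              exact List.getElem_mem _
            rw [← htaken] at hmem
            exact hmem
          refine ⟨qg + 1, by omega, by simp; omega, ⟨j, ?_⟩⟩
          have h6 := wg.head_getElem hqg
          rw [← h6]
          exact head_mem_pathVerts her
    · have hvg : s₂.1 ∈ N.pathVerts g := hon.2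
      have hvr : s₂.1 ∈ N.pathVerts (P a c) := hs2r.2
      obtain ⟨m0, hm0', hvm0⟩ := List.mem_iff_getElem.mp
        ((wg.mem_pathVerts_iff hgne).mp hvg)
      refine ⟨m0, ?_, hm0', ⟨a, by rw [hvm0]; exact hvr⟩⟩
      by_contra hle'
      push_neg at hle'
      have hagree := vseq_lcp_agree wr wg (t := m0) (hn ▸ hle') (by omega)
        (by simp at hm0'; omega)
      have hvr' : s₂.1 ∈ N.pathVerts r := by
        rw [← hvm0, ← hagree]
        exact (wr.mem_pathVerts_iff hrne).mpr (List.getElem_mem _)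
      have hsnk := stable_pathVerts_disjoint hP (a := a) (b := j) haj hvr hvr'
      rw [hsnk] at hvg
      exact hsnkc_g hvg
  obtain ⟨m0, hm0n, hm0len, hm0red⟩ := hextract
  have hPex : ∃ m, n < m ∧ ∃ hm : m < (N.vseq (N.src j) g).length,
      ∃ i2, ((N.vseq (N.src j) g)[m]'hm) ∈ N.pathVerts (P i2 c) :=
    ⟨m0, hm0n, hm0len, hm0red⟩
  obtain ⟨hpsn, hpslen, i', hred⟩ := Nat.find_spec hPex
  have hmin : ∀ m', m' < Nat.find hPex → ¬ (n < m' ∧ ∃ hm : m' < (N.vseq (N.src j) g).length,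
      ∃ i2, ((N.vseq (N.src j) g)[m']'hm) ∈ N.pathVerts (P i2 c)) :=
    fun m' hm' => Nat.find_min hPex hm'
  set ps := Nat.find hPex with hps
  have hpsle : ps ≤ g.length := by simp at hpslen; omega
  set conn := (g.drop n).take (ps - n) with hconn
  have hconnlen : conn.length = ps - n := by
    rw [hconn]
    simp
    omega
  have hconnne : conn ≠ [] := by
    intro hh
    have := congrArg List.length hh
    rw [hconnlen] at this
    simp at this
    omega
  have hwalk : N.Walk ((N.vseq (N.src j) g)[n]'(by simp; omega))
      ((N.vseq (N.src j) g)[ps]'hpslen) conn := wg.infix (le_of_lt hpsn) hpsle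
  have hconn_getElem : ∀ t (ht : t < conn.length), conn[t] = g[n+t]'(by
      rw [hconnlen] at ht; omega) := by
    intro t ht
    have ht' : t < ((g.drop n).take (ps - n)).length := ht
    show ((g.drop n).take (ps - n))[t]'ht' = _
    rw [List.getElem_take, List.getElem_drop]
  have hconn_sub : ∀ e ∈ conn, e ∈ g := by
    intro e he
    rw [hconn] at he
    exact List.mem_of_mem_drop (List.mem_of_mem_take he)
  have hagree0 : (N.vseq (N.src j) r)[n]'(by simp; omega) =
      (N.vseq (N.src j) g)[n]'(by simp; omega) :=
    vseq_lcp_agree wr wg (le_of_eq hn.symm) (by omega) (by omega)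
  have hfree : ∀ e ∈ conn, ∀ i2, e ∉ P i2 c := by
    intro e he i2 hei2
    obtain ⟨t, ht, rfl⟩ := List.mem_iff_getElem.mp he
    have htlen : n + t < ps := by rw [hconnlen] at ht; omega
    have hegt := hconn_getElem t ht
    have htail : N.tail (conn[t]'ht) = (N.vseq (N.src j) g)[n+t]'(by simp; omega) := by
      rw [hegt]
      exact wg.tail_getElem (by omega)
    have hhead : N.head (conn[t]'ht) = (N.vseq (N.src j) g)[n+t+1]'(by simp; omega) := by
      rw [hegt]
      exact wg.head_getElem (by omega)
    rcases Nat.eq_zero_or_pos t with ht0 | htpos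
    · rcases Nat.lt_or_ge (n + t + 1) ps with hlt | hge
      · apply hmin (n + t + 1) hlt
        exact ⟨by omega, by simp; omega, ⟨i2, by rw [← hhead]; exact head_mem_pathVerts hei2⟩⟩
      · have hagree := vseq_lcp_agree wr wg (t := n + t)
          (show n + t ≤ lcpLen r g by omega) (by omega) (by omega)
        have hxr : N.tail (conn[t]'ht) ∈ N.pathVerts r := by
          rw [htail, ← hagree]
          exact (wr.mem_pathVerts_iff hrne).mpr (List.getElem_mem _)
        have hxg2 : N.tail (conn[t]'ht) ∈ N.pathVerts (P i2 c) := tail_mem_pathVerts hei2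
        rcases eq_or_ne i2 j with hi2 | hi2
        · rw [hi2] at hei2
          rw [← hr] at hei2
          obtain ⟨qr, hqr, hqre⟩ := List.mem_iff_getElem.mp hei2
          have h10 := wr.tail_getElem hqr
          have h9 : N.tail (conn[t]'ht) = (N.vseq (N.src j) r)[n+t]'(by simp; omega) := by
            rw [htail, ← hagree]
          have h11 : (N.vseq (N.src j) r)[qr]'(by simp; omega) =
              (N.vseq (N.src j) r)[n+t]'(by simp; omega) := by
            rw [← h10, hqre, h9]
          have h12 : qr = n + t := wr.vseq_nodup.getElem_inj_iff.mp h11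
          have h13 : r[n+t]'(by omega) = g[n+t]'(by omega) := by
            have e3 : r[n+t]'(by omega) = r[qr]'hqr := by congr 1; omega
            rw [e3, hqre, hegt]
          have h13' : r[n]'(by omega) = g[n]'(by omega) := by
            have e1 : r[n]'(by omega) = r[n+t]'(by omega) := by congr 1; omega
            have e2 : g[n]'(by omega) = g[n+t]'(by omega) := by congr 1; omega
            rw [e1, e2, h13]
          have hcontra := lcpLen_max (p := r) (q := g) (m := n + 1)
            (by rw [← hn]; omega) (by omega)
          apply hcontra
          rw [List.take_succ, List.take_succ, htaken,
            List.getElem?_eq_getElem (by omega : n < r.length),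
            List.getElem?_eq_getElem (by omega : n < g.length), h13']
        · have hsnk := stable_pathVerts_disjoint hP (a := i2) (b := j) hi2 hxg2 hxr
          apply hsnkc_g
          rw [← hsnk, htail]
          exact (wg.mem_pathVerts_iff hgne).mpr (List.getElem_mem _)
    · apply hmin (n + t) (by omega)
      exact ⟨by omega, by simp; omega, ⟨i2, by rw [← htail]; exact tail_mem_pathVerts hei2⟩⟩
  -- now case on where the landing vertex lies
  rcases eq_or_ne i' j with hij' | hij'
  · exfalso
    rw [hij'] at hred
    obtain ⟨mm, hmm, hymm⟩ := List.mem_iff_getElem.mp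
      ((wr.mem_pathVerts_iff hrne).mp hred)
    have hmmn : n < mm := by
      by_contra hle2
      push_neg at hle2
      have hagree := vseq_lcp_agree wr wg (t := mm) (hn ▸ hle2) (by omega)
        (by omega)
      have h14 : (N.vseq (N.src j) g)[mm]'(by simp; omega) =
          (N.vseq (N.src j) g)[ps]'hpslen := by
        rw [← hagree, hymm]
      have := wg.vseq_nodup.getElem_inj_iff.mp h14
      omega
    have hmmle : mm ≤ r.length := by simp at hmm; omega
    apply reroute_single hP (j := c) (a := j) (n := n) (m := mm) (le_of_lt hmmn) hmmle
      hconnne ?_ hfree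
    rw [hagree0, hymm]
    exact hwalk
  rcases eq_or_ne i' i with hii' | hii'
  · exfalso
    rw [hii'] at hred
    have hyg : ((N.vseq (N.src j) g)[ps]'hpslen) ∈ N.pathVerts g :=
      (wg.mem_pathVerts_iff hgne).mpr (List.getElem_mem _)
    obtain ⟨s', hs'lcs, hs'onr, hs'ong, hs'y⟩ :=
      exists_lcs_through (p := P i c) (q := g) hred hyg
    have hs'mem : s' ∈ cntSet N P c d (P i c) := ⟨⟨i, j, hs'lcs⟩, hs'onr⟩
    have hstar_i := prefix_lcs_P hP hcd i
    have hstari_mem : (N.src i, (P i c).take (lcpLen (P i c) (P i d))) ∈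
        cntSet N P c d (P i c) :=
      ⟨⟨i, i, hstar_i⟩, hstar_i.2.1 (P i c) (Set.mem_insert _ _)⟩
    have hsub : Subsingleton ↥(cntSet N P c d (P i c)) := (Nat.card_eq_one_iff_unique.mp h1).1
    have heqs : s' = (N.src i, (P i c).take (lcpLen (P i c) (P i d))) := by
      have := hsub.elim ⟨s', hs'mem⟩ ⟨_, hstari_mem⟩
      exact Subtype.ext_iff.mp this
    rw [heqs] at hs'y
    have hyid : ((N.vseq (N.src j) g)[ps]'hpslen) ∈ N.pathVerts (P i d) := by
      rcases Set.mem_insert_iff.mp hs'y with h | h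
      · rw [h]
        exact (walkP hP i d).start_mem_pathVerts (neNilP hP i d)
      · have htk := take_lcpLen_eq (P i c) (P i d)
        rw [htk] at h
        exact pathVerts_mono (fun e2 he2 => List.mem_of_mem_take he2) h
    have hsnk := stable_pathVerts_disjoint hP (a := i) (b := j)
      (fun hh => hij hh.symm) hyid hyg
    rw [hsnk] at hred
    exact Walk.snk_not_mem hcd.symm (walkP hP i c) hred
  · refine ⟨i', hij', hii', n, hn, (by simp; omega), ?_⟩
    have wri' := walkP hP i' c
    obtain ⟨mm, hmm, hymm⟩ := List.mem_iff_getElem.mp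
      ((wri'.mem_pathVerts_iff (neNilP hP i' c)).mp hred)
    refine ⟨mm, hmm, conn, hconnne, ?_, hfree, hconn_sub, ?_⟩
    · rw [hagree0, hymm]
      exact hwalk
    · rw [hymm]
      exact (wg.mem_pathVerts_iff hgne).mpr (List.getElem_mem _)

end ConnectorMain

section Master

variable {N : KPairNetwork 3} {P : Fin 3 → Fin 3 → List N.A}

lemma master (hP : N.IsStableSystem P) {c d : Fin 3} (hcd : c ≠ d) {i : Fin 3}
    (h1 : Nat.card (cntSet N P c d (P i c)) = 1) :
    ∃ j : Fin 3, j ≠ i ∧ Nat.card (cntSet N P c d (P j d)) = 1 := by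
  by_contra hcon
  push_neg at hcon
  obtain ⟨j, k', hji, hki, hjk, htri⟩ :
      ∃ j k' : Fin 3, j ≠ i ∧ k' ≠ i ∧ j ≠ k' ∧ ∀ x : Fin 3, x = i ∨ x = j ∨ x = k' := by
    fin_cases i
    · exact ⟨1, 2, by decide, by decide, by decide, by decide⟩
    · exact ⟨0, 2, by decide, by decide, by decide, by decide⟩
    · exact ⟨0, 1, by decide, by decide, by decide, by decide⟩
  obtain ⟨k1, hk1j, hk1i, n, hneq, hn, m, hm, conn, hcne, hcwalk, hcfree, hcsub, hcland⟩ :=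
    connector hP hcd hji h1 (hcon j hji)
  obtain ⟨k2, hk2k, hk2i, n', hneq', hn', m', hm', conn', hc'ne, hc'walk, hc'free, hc'sub,
    hc'land⟩ := connector hP hcd hki h1 (hcon k' hki)
  have hk1e : k1 = k' := by
    rcases htri k1 with h | h | h
    · exact absurd h hk1i
    · exact absurd h hk1j
    · exact h
  have hk2e : k2 = j := by
    rcases htri k2 with h | h | h
    · exact absurd h hk2i
    · exact h
    · exact absurd h hk2k
  have hk1e' : k' = k1 := hk1e.symm
  subst hk1e'
  have hk2e' : j = k2 := hk2e.symm
  subst hk2e'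
  -- lengths and walks
  have wrj := walkP hP j c
  have wgj := walkP hP j d
  have wrk := walkP hP k' c
  have wgk := walkP hP k' d
  have hrjne := neNilP hP j c
  have hgjne := neNilP hP j d
  have hrkne := neNilP hP k' c
  have hgkne := neNilP hP k' d
  have hnrj : n < (P j c).length := by
    rw [hneq]
    exact lcp_lt_left wrj hrjne (Walk.snk_not_mem hcd wgj)
  have hngj : n < (P j d).length := by
    rw [hneq]
    exact lcp_lt_right wgj hgjne (Walk.snk_not_mem hcd.symm wrj)
  have hnrk : n' < (P k' c).length := by
    rw [hneq']
    exact lcp_lt_left wrk hrkne (Walk.snk_not_mem hcd wgk)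
  have hngk : n' < (P k' d).length := by
    rw [hneq']
    exact lcp_lt_right wgk hgkne (Walk.snk_not_mem hcd.symm wrk)
  have hmle : m ≤ (P k' c).length := by simp at hm; omega
  have hm'le : m' ≤ (P j c).length := by simp at hm'; omega
  -- n < m' : landing vertex of conn' is after the prefix of P j c
  have hnm' : n ≤ m' := by
    by_contra hlt
    push_neg at hlt
    have hle2 : m' ≤ n := le_of_lt hlt
    have hagree := vseq_lcp_agree wrj wgj (t := m') (hneq ▸ hle2) (by omega) (by omega)
    have hvg : ((N.vseq (N.src j) (P j c))[m']'hm') ∈ N.pathVerts (P j d) := by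
      rw [hagree]
      exact (wgj.mem_pathVerts_iff hgjne).mpr (List.getElem_mem _)
    have hsnk := stable_pathVerts_disjoint hP (a := k') (b := j)
      (fun hh => hjk hh.symm) hc'land hvg
    have hvr : ((N.vseq (N.src j) (P j c))[m']'hm') ∈ N.pathVerts (P j c) :=
      (wrj.mem_pathVerts_iff hrjne).mpr (List.getElem_mem _)
    rw [hsnk] at hvr
    exact Walk.snk_not_mem hcd.symm wrj hvr
  have hn'm : n' ≤ m := by
    by_contra hlt
    push_neg at hlt
    have hle2 : m ≤ n' := le_of_lt hlt
    have hagree := vseq_lcp_agree wrk wgk (t := m) (hneq' ▸ hle2) (by omega) (by omega)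
    have hvg : ((N.vseq (N.src k') (P k' c))[m]'hm) ∈ N.pathVerts (P k' d) := by
      rw [hagree]
      exact (wgk.mem_pathVerts_iff hgkne).mpr (List.getElem_mem _)
    have hsnk := stable_pathVerts_disjoint hP (a := j) (b := k') hjk hcland hvg
    have hvr : ((N.vseq (N.src k') (P k' c))[m]'hm) ∈ N.pathVerts (P k' c) :=
      (wrk.mem_pathVerts_iff hrkne).mpr (List.getElem_mem _)
    rw [hsnk] at hvr
    exact Walk.snk_not_mem hcd.symm wrk hvr
  have hcc' : ∀ e ∈ conn, e ∉ conn' := fun e he he' =>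
    hP.1.2 d j k' hjk e (hcsub e he) (hc'sub e he')
  exact reroute_double hP (j := c) (a := j) (b := k') hjk hnm' hm'le hn'm hmle
    hcne hc'ne hcwalk hc'walk hcfree hc'free hcc'

end Master
end KPairNetwork

/-- Corollary 1 of the paper: in a stable 3-pair network,
if `ℓ(r_i) = 1` for some `i` then `ℓ(g_j) = 1` for some `j ≠ i`, and
symmetrically with the roles of `r` and `g` exchanged. -/
theorem statement5 (N : KPairNetwork 3) (P : Fin 3 → Fin 3 → List N.A)
    (hP : N.IsStableSystem P) :
    (∀ i : Fin 3, N.lcsCount P 0 1 (P i 0) = 1 →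
      ∃ j : Fin 3, j ≠ i ∧ N.lcsCount P 0 1 (P j 1) = 1) ∧
    (∀ i : Fin 3, N.lcsCount P 0 1 (P i 1) = 1 →
      ∃ j : Fin 3, j ≠ i ∧ N.lcsCount P 0 1 (P j 0) = 1) := by
  have hcnt : ∀ p : List N.A,
      N.lcsCount P 0 1 p = Nat.card (KPairNetwork.cntSet N P 0 1 p) := fun _ => rfl
  have hswap : ∀ p : List N.A,
      KPairNetwork.cntSet N P 1 0 p = KPairNetwork.cntSet N P 0 1 p := by
    intro p
    ext s
    constructor
    · rintro ⟨⟨a, b, h⟩, hon⟩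
      exact ⟨⟨b, a, (Set.pair_comm (P a 1) (P b 0)) ▸ h⟩, hon⟩
    · rintro ⟨⟨a, b, h⟩, hon⟩
      exact ⟨⟨b, a, (Set.pair_comm (P a 0) (P b 1)) ▸ h⟩, hon⟩
  constructor
  · intro i hi
    rw [hcnt] at hi
    obtain ⟨j, hj, hcard⟩ := KPairNetwork.master hP (show (0 : Fin 3) ≠ 1 by decide) hi
    exact ⟨j, hj, by rw [hcnt]; exact hcard⟩
  · intro i hi
    have h1 : Nat.card (KPairNetwork.cntSet N P 1 0 (P i 1)) = 1 := by
      rw [hswap, ← hcnt]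
      exact hi
    obtain ⟨j, hj, hcard⟩ := KPairNetwork.master hP (show (1 : Fin 3) ≠ 0 by decide) h1
    refine ⟨j, hj, ?_⟩
    rw [hcnt, ← hswap]
    exact hcard
end
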